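/- arXiv:1906.09593 — 7 statements merged into one kernel-verified Lean document; each statement's English description precedes it below -/
import Mathlib

section
/- Let J ⊆ R = 𝕂[[z,x₁,…,xₙ]] be an ideal of order c with 1 ≤ c < ∞, and let K = coeff_V(J) be its coefficient ideal with respect to V = V(z). Then ord K ≥ c!. -/
noncomputable section

/-- The order of an element `g` with respect to an ideal `I`:  `sup {k : ℕ | g ∈ I ^ k}`,
with value in `ℕ∞` (so that the order of `0` is `⊤`). -/
def elemOrd {A : Type*} [CommRing A] (I : Ideal A) (g : A) : ℕ∞ :=
  sSup ((fun k : ℕ => (k : ℕ∞)) '' {k : ℕ | g ∈ I ^ k})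

/-- The order of an ideal `J` with respect to an ideal `I`: `sup {k : ℕ | J ⊆ I ^ k}`. -/
def idealOrd {A : Type*} [CommRing A] (I J : Ideal A) : ℕ∞ :=
  sSup ((fun k : ℕ => (k : ℕ∞)) '' {k : ℕ | J ≤ I ^ k})

/-- The coefficient ideal `K = coeff_{V(z)}(J) = Σ_{i<c} (f_i : f ∈ J)^{c!/(c−i)}` of an ideal
`J ⊆ R = 𝕂[[z,x₁,…,xₙ]] = Q[[z]]` with respect to the hypersurface `V(z)`, an ideal of
`Q = 𝕂[[x₁,…,xₙ]]`. -/
def coeffIdeal {𝕂 : Type*} [Field 𝕂] {n : ℕ}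
    (J : Ideal (PowerSeries (MvPowerSeries (Fin n) 𝕂))) (c : ℕ) :
    Ideal (MvPowerSeries (Fin n) 𝕂) :=
  ∑ i ∈ Finset.range c,
    (Ideal.span ((PowerSeries.coeff (R := MvPowerSeries (Fin n) 𝕂) i) '' J)) ^ (c.factorial / (c - i))


lemma coeff_mem_pow {Q : Type*} [CommRing Q] [IsLocalRing Q]
    (c : ℕ) (g : PowerSeries Q)
    (hg : g ∈ (IsLocalRing.maximalIdeal (PowerSeries Q)) ^ c) (i : ℕ) :
    PowerSeries.coeff (R := Q) i g ∈ (IsLocalRing.maximalIdeal Q) ^ (c - i) := by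
  induction c generalizing g i with
  | zero => simpa using Submodule.mem_top
  | succ c ih =>
    rw [pow_succ] at hg
    induction hg using Submodule.mul_induction_on' with
    | mem_mul_mem a ha b hb =>
      rw [PowerSeries.coeff_mul]
      refine Ideal.sum_mem _ fun p hp => ?_
      rw [Finset.HasAntidiagonal.mem_antidiagonal] at hp
      rcases Nat.eq_zero_or_pos p.2 with h2 | h2
      · have hb0 : PowerSeries.coeff (R := Q) p.2 b ∈ IsLocalRing.maximalIdeal Q := by
          rw [h2]
          have : ¬ IsUnit b := hb
          rw [PowerSeries.isUnit_iff_constantCoeff] at this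
          simpa [PowerSeries.coeff_zero_eq_constantCoeff] using this
        have := Ideal.mul_mem_mul (ih a ha p.1) hb0
        rw [← pow_succ] at this
        refine Ideal.pow_le_pow_right ?_ this
        omega
      · have := ih a ha p.1
        have h1 : PowerSeries.coeff (R := Q) p.1 a * PowerSeries.coeff (R := Q) p.2 b
            ∈ (IsLocalRing.maximalIdeal Q) ^ (c - p.1) :=
          Ideal.mul_mem_right _ _ this
        exact Ideal.pow_le_pow_right (by omega) h1
    | add x hx y hy ihx ihy => simp only [map_add]; exact Ideal.add_mem _ ihx ihy

set_option synthInstance.maxHeartbeats 1000000 in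
set_option maxHeartbeats 1000000 in
/-- Let `J ⊆ R = 𝕂[[z,x₁,…,xₙ]]` be an ideal of order `c` with `1 ≤ c < ∞`, and let
`K = coeff_{V(z)}(J)` be its coefficient ideal.  Then `ord K ≥ c!`. -/
theorem coeff_ideal_order_ge_factorial {𝕂 : Type*} [Field 𝕂] {n : ℕ}
    (J : Ideal (PowerSeries (MvPowerSeries (Fin n) 𝕂))) (c : ℕ) (hc1 : 1 ≤ c)
    (hc : idealOrd (IsLocalRing.maximalIdeal (PowerSeries (MvPowerSeries (Fin n) 𝕂))) J
      = (c : ℕ∞)) :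
    idealOrd (IsLocalRing.maximalIdeal (MvPowerSeries (Fin n) 𝕂)) (coeffIdeal J c)
      ≥ (c.factorial : ℕ∞) := by
  set Q := MvPowerSeries (Fin n) 𝕂
  set mR := IsLocalRing.maximalIdeal (PowerSeries Q)
  set mQ := IsLocalRing.maximalIdeal Q
  -- Step 1: J ≤ mR ^ c
  have hJ : J ≤ mR ^ c := by
    have hlt : ((c - 1 : ℕ) : ℕ∞) < idealOrd mR J := by
      rw [hc]; exact_mod_cast Nat.sub_lt (by omega) one_pos
    rw [idealOrd, lt_sSup_iff] at hlt
    obtain ⟨b, ⟨k, hk, rfl⟩, hb⟩ := hlt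
    have hb' : c - 1 < k := by beta_reduce at hb; exact_mod_cast hb
    exact hk.trans (Ideal.pow_le_pow_right (by omega))
  -- Step 2: coeffIdeal J c ≤ mQ ^ c!
  have hK : coeffIdeal J c ≤ mQ ^ c.factorial := by
    rw [coeffIdeal]
    refine Finset.sum_induction _ (fun I => I ≤ mQ ^ c.factorial)
      (fun a b ha hb => by rw [Submodule.add_eq_sup]; exact sup_le ha hb)
      bot_le (fun i hi => ?_)
    rw [Finset.mem_range] at hi
    have hspan : Ideal.span ((PowerSeries.coeff (R := Q) i) '' J) ≤ mQ ^ (c - i) := by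
      rw [Ideal.span_le]
      rintro _ ⟨f, hf, rfl⟩
      exact coeff_mem_pow c f (hJ hf) i
    calc (Ideal.span ((PowerSeries.coeff (R := Q) i) '' J)) ^ (c.factorial / (c - i))
        ≤ (mQ ^ (c - i)) ^ (c.factorial / (c - i)) := Ideal.pow_right_mono hspan _
      _ = mQ ^ ((c - i) * (c.factorial / (c - i))) := by rw [← pow_mul]
      _ = mQ ^ c.factorial := by
          rw [Nat.mul_div_cancel' (Nat.dvd_factorial (by omega) (by omega))]
  exact le_sSup ⟨c.factorial, hK, rfl⟩
end
end

section
/- Let J ⊆ R = 𝕂[[z,x₁,…,xₙ]] be an ideal of order c with 1 ≤ c < ∞, and let K = coeff_V(J) be its coefficient ideal with respect to V = V(z). Then ord K > c! holds if and only if J ≡ (z^c) modulo m_R^{c+1}, i.e., if and only if J + m_R^{c+1} = (z^c) + m_R^{c+1}. -/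
set_option synthInstance.maxHeartbeats 400000
set_option maxHeartbeats 800000

noncomputable section

section AuxMv

open MvPowerSeries

variable {𝕂 : Type*} [Field 𝕂] {n : ℕ}

lemma mq_mem (g : MvPowerSeries (Fin n) 𝕂) :
    g ∈ IsLocalRing.maximalIdeal (MvPowerSeries (Fin n) 𝕂) ↔
      MvPowerSeries.constantCoeff g = 0 := by
  rw [IsLocalRing.mem_maximalIdeal, mem_nonunits_iff, MvPowerSeries.isUnit_iff_constantCoeff]
  simp [isUnit_iff_ne_zero]

lemma degree_single_one (i : Fin n) : Finsupp.degree (Finsupp.single i 1) = 1 := by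
  exact Finsupp.degree_single i 1

/-- the ideal of series with order at least `k` -/
def ordIdeal (k : ℕ) : Ideal (MvPowerSeries (Fin n) 𝕂) where
  carrier := {g | (k : ℕ∞) ≤ g.order}
  add_mem' := fun ha hb => le_trans (le_min ha hb) min_order_le_add
  zero_mem' := by simp
  smul_mem' := fun r g hg => by
    rw [smul_eq_mul]
    refine le_trans (le_trans hg le_add_self) le_order_mul

lemma mem_ordIdeal {k : ℕ} {g : MvPowerSeries (Fin n) 𝕂} :
    g ∈ (ordIdeal k : Ideal (MvPowerSeries (Fin n) 𝕂)) ↔ (k : ℕ∞) ≤ g.order := Iff.rfl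

lemma mq_le_ordIdeal :
    IsLocalRing.maximalIdeal (MvPowerSeries (Fin n) 𝕂) ≤ ordIdeal 1 := by
  intro g hg
  rw [mem_ordIdeal]
  have h0 : MvPowerSeries.constantCoeff g = 0 := (mq_mem g).mp hg
  exact_mod_cast nat_le_order (fun d hd => by
    have : d = 0 := by
      rw [← Finsupp.degree_eq_zero_iff]; omega
    subst this
    simpa using h0)

lemma le_order_of_mem_pow {k : ℕ} {g : MvPowerSeries (Fin n) 𝕂}
    (h : g ∈ (IsLocalRing.maximalIdeal (MvPowerSeries (Fin n) 𝕂)) ^ k) :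
    (k : ℕ∞) ≤ g.order := by
  induction k generalizing g with
  | zero => simp
  | succ k ih =>
      have hle : (IsLocalRing.maximalIdeal (MvPowerSeries (Fin n) 𝕂)) ^ (k + 1) ≤
          ordIdeal (k + 1) := by
        rw [pow_succ]
        refine Ideal.mul_le.mpr fun f hf g hg => ?_
        rw [mem_ordIdeal]
        have h1 : (k : ℕ∞) ≤ f.order := ih hf
        have h2 : (1 : ℕ∞) ≤ g.order := mq_le_ordIdeal hg
        refine le_trans ?_ le_order_mul
        push_cast
        exact add_le_add h1 h2
      exact hle h



theorem mem_pow_of_le_order {k : ℕ} {g : MvPowerSeries (Fin n) 𝕂}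
    (h : (k : ℕ∞) ≤ g.order) :
    g ∈ (IsLocalRing.maximalIdeal (MvPowerSeries (Fin n) 𝕂)) ^ k := by
  classical
  induction k generalizing g with
  | zero => simp
  | succ k ih =>
    set M := IsLocalRing.maximalIdeal (MvPowerSeries (Fin n) 𝕂) with hM
    set s : Fin n → MvPowerSeries (Fin n) 𝕂 := fun i e =>
      if (∀ j, j < i → e j = 0) then MvPowerSeries.coeff (R := 𝕂) (e + Finsupp.single i 1) g else 0
      with hs
    have hcoeff : ∀ i e, MvPowerSeries.coeff (R := 𝕂) e (s i) =
        if (∀ j, j < i → e j = 0) then MvPowerSeries.coeff (R := 𝕂) (e + Finsupp.single i 1) g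
        else 0 := fun i e => rfl
    have hsum : ∑ i, (MvPowerSeries.X i : MvPowerSeries (Fin n) 𝕂) * s i = g := by
      ext d
      rw [map_sum]
      by_cases hd : d = 0
      · subst hd
        rw [Finset.sum_eq_zero, eq_comm]
        · have : Finsupp.degree (0 : Fin n →₀ ℕ) < ((k+1 : ℕ) : ℕ∞) := by
            simp [map_zero]
          exact coeff_of_lt_order (lt_of_lt_of_le this h)
        · intro i _
          rw [X_def, coeff_monomial_mul, if_neg]
          simp [Finsupp.single_le_iff]
      · have hne : d.support.Nonempty := Finsupp.support_nonempty_iff.mpr hd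
        set i₀ := d.support.min' hne with hi₀def
        have hi₀mem : i₀ ∈ d.support := d.support.min'_mem hne
        have hi₀ : d i₀ ≠ 0 := Finsupp.mem_support_iff.mp hi₀mem
        have hle : Finsupp.single i₀ 1 ≤ d := by
          rw [Finsupp.single_le_iff]; omega
        rw [Finset.sum_eq_single i₀]
        · rw [X_def, coeff_monomial_mul, if_pos hle, one_mul, hcoeff, if_pos, tsub_add_cancel_of_le hle]
          intro j hj
          have : j ∉ d.support := fun hmem => absurd (d.support.min'_le j hmem) (by omega)
          have hdj : d j = 0 := by simpa [Finsupp.mem_support_iff] using this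
          rw [Finsupp.tsub_apply, Finsupp.single_apply, if_neg (by omega), hdj]
          simp
        · intro i _ hne'
          rw [X_def, coeff_monomial_mul]
          split
          · rw [hcoeff, if_neg, mul_zero]
            intro hall
            rename_i hle'
            have hi : d i ≠ 0 := by
              have := Finsupp.single_le_iff.mp hle'
              omega
            have h1 : i₀ ≤ i := d.support.min'_le i (Finsupp.mem_support_iff.mpr hi)
            have h2 : ¬ (i₀ < i) := by
              intro hlt
              have := hall i₀ hlt
              rw [Finsupp.tsub_apply, Finsupp.single_apply, if_neg (by omega)] at this
              omega
            exact hne' (le_antisymm (not_lt.mp h2) h1)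
          · rfl
        · intro hmem
          exact absurd (Finset.mem_univ i₀) hmem
    have hmem : ∀ i, s i ∈ M ^ k := by
      intro i
      apply ih
      refine nat_le_order (n := k) (f := s i) fun e he => ?_
      rw [hcoeff]
      split
      · apply coeff_of_lt_order
        have hdeg : Finsupp.degree (e + Finsupp.single i 1) = Finsupp.degree e + 1 := by
          rw [Finsupp.degree_eq_weight_one, map_add, ← Finsupp.degree_eq_weight_one]
          have h1 : Finsupp.degree (Finsupp.single i (1:ℕ)) = 1 := by
            exact Finsupp.degree_single i 1
          rw [h1]
        refine lt_of_lt_of_le ?_ h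
        rw [hdeg]
        exact_mod_cast by omega
      · rfl
    rw [← hsum, pow_succ']
    refine Ideal.sum_mem _ fun i _ => Ideal.mul_mem_mul ?_ (hmem i)
    rw [hM, IsLocalRing.mem_maximalIdeal, mem_nonunits_iff, MvPowerSeries.isUnit_iff_constantCoeff]
    simp [isUnit_iff_ne_zero]



theorem my_order_mul (f g : MvPowerSeries (Fin n) 𝕂) :
    (f * g).order = f.order + g.order := by
  classical
  rcases eq_or_ne f 0 with rfl | hf
  · simp
  rcases eq_or_ne g 0 with rfl | hg
  · simp
  lift f.order to ℕ using (by simpa using hf) with p hp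
  lift g.order to ℕ using (by simpa using hg) with q hq
  refine le_antisymm ?_ (by rw [hp, hq]; exact le_order_mul)
  set f' := homogeneousComponent p f with hf'def
  set g' := homogeneousComponent q g with hg'def
  have hcf : ∀ d, MvPowerSeries.coeff (R := 𝕂) d f' =
      if Finsupp.degree d = p then MvPowerSeries.coeff (R := 𝕂) d f else 0 :=
    fun d => coeff_homogeneousComponent p d f
  have hcg : ∀ d, MvPowerSeries.coeff (R := 𝕂) d g' =
      if Finsupp.degree d = q then MvPowerSeries.coeff (R := 𝕂) d g else 0 :=
    fun d => coeff_homogeneousComponent q d g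
  have hf'0 : f' ≠ 0 := by
    obtain ⟨d, hd1, hd2⟩ := exists_coeff_ne_zero_and_order (f := f) (by rw [← hp]; rfl)
    have hdp : Finsupp.degree d = p := by
      rw [← hp] at hd2; exact_mod_cast hd2
    intro h0
    apply hd1
    have := congrArg (MvPowerSeries.coeff (R := 𝕂) d) h0
    rw [hcf d, if_pos hdp] at this
    simpa using this
  have hg'0 : g' ≠ 0 := by
    obtain ⟨d, hd1, hd2⟩ := exists_coeff_ne_zero_and_order (f := g) (by rw [← hq]; rfl)
    have hdq : Finsupp.degree d = q := by
      rw [← hq] at hd2; exact_mod_cast hd2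
    intro h0
    apply hd1
    have := congrArg (MvPowerSeries.coeff (R := 𝕂) d) h0
    rw [hcg d, if_pos hdq] at this
    simpa using this
  have hfg' : f' * g' ≠ 0 := mul_ne_zero hf'0 hg'0
  obtain ⟨d, hd⟩ : ∃ d, MvPowerSeries.coeff (R := 𝕂) d (f' * g') ≠ 0 := by
    by_contra hcon
    push_neg at hcon
    exact hfg' (MvPowerSeries.ext fun d => by rw [hcon d, map_zero])
  have hdeg : Finsupp.degree d = p + q := by
    rw [coeff_mul] at hd
    obtain ⟨⟨a, b⟩, hab, hne0⟩ := Finset.exists_ne_zero_of_sum_ne_zero hd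
    have habd : a + b = d := Finset.HasAntidiagonal.mem_antidiagonal.mp hab
    have ha : Finsupp.degree a = p := by
      have := left_ne_zero_of_mul hne0
      rw [hcf a] at this
      by_contra hcon
      rw [if_neg hcon] at this
      exact this rfl
    have hb : Finsupp.degree b = q := by
      have := right_ne_zero_of_mul hne0
      rw [hcg b] at this
      by_contra hcon
      rw [if_neg hcon] at this
      exact this rfl
    rw [← habd, Finsupp.degree_eq_weight_one, map_add, ← Finsupp.degree_eq_weight_one, ha, hb]
  have heq : MvPowerSeries.coeff (R := 𝕂) d (f * g) = MvPowerSeries.coeff (R := 𝕂) d (f' * g') := by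
    rw [coeff_mul, coeff_mul]
    refine Finset.sum_congr rfl fun ⟨a, b⟩ hab => ?_
    have habd : a + b = d := Finset.HasAntidiagonal.mem_antidiagonal.mp hab
    have hsum : Finsupp.degree a + Finsupp.degree b = p + q := by
      rw [← hdeg, ← habd, Finsupp.degree_eq_weight_one, map_add,
        ← Finsupp.degree_eq_weight_one]
    rw [hcf a, hcg b]
    by_cases h1 : Finsupp.degree a = p
    · have h2 : Finsupp.degree b = q := by omega
      rw [if_pos h1, if_pos h2]
    · by_cases h1' : Finsupp.degree a < p
      · have hfa : MvPowerSeries.coeff (R := 𝕂) a f = 0 := by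
          apply coeff_of_lt_order
          rw [← hp]
          exact_mod_cast h1'
        rw [hfa, if_neg h1, zero_mul, zero_mul]
      · have h2 : Finsupp.degree b < q := by omega
        have hgb : MvPowerSeries.coeff (R := 𝕂) b g = 0 := by
          apply coeff_of_lt_order
          rw [← hq]
          exact_mod_cast h2
        rw [hgb, if_neg h1, mul_zero, zero_mul]
  have : MvPowerSeries.coeff (R := 𝕂) d (f * g) ≠ 0 := by rw [heq]; exact hd
  have hle := order_le (f := f * g) this
  rw [hdeg] at hle
  refine le_trans hle ?_
  push_cast
  exact le_refl _

theorem my_order_pow (g : MvPowerSeries (Fin n) 𝕂) {p : ℕ} (hp : g.order = p) (e : ℕ) :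
    (g ^ e).order = ((e * p : ℕ) : ℕ∞) := by
  induction e with
  | zero =>
      simp only [pow_zero, Nat.zero_mul, Nat.cast_zero]
      have : (1 : MvPowerSeries (Fin n) 𝕂) = monomial 0 (1:𝕂) := by
        simp
      rw [this, order_monomial_of_ne_zero one_ne_zero]
      simp [map_zero]
  | succ e ih =>
      rw [pow_succ, my_order_mul, ih, hp]
      push_cast
      ring

theorem order_ge_of_pow_mem {g : MvPowerSeries (Fin n) 𝕂} {e w N : ℕ}
    (he : 0 < e) (hlt : e * w < N)
    (h : g ^ e ∈ (IsLocalRing.maximalIdeal (MvPowerSeries (Fin n) 𝕂)) ^ N) :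
    g ∈ (IsLocalRing.maximalIdeal (MvPowerSeries (Fin n) 𝕂)) ^ (w + 1) := by
  rcases eq_or_ne g 0 with rfl | hg
  · exact Submodule.zero_mem _
  lift g.order to ℕ using (by simpa using hg) with p hp
  have hN := le_order_of_mem_pow h
  rw [my_order_pow g hp.symm e] at hN
  have hN' : N ≤ e * p := by exact_mod_cast hN
  have hwp : w < p := Nat.lt_of_mul_lt_mul_left (lt_of_lt_of_le hlt hN')
  apply mem_pow_of_le_order
  rw [← hp]
  exact_mod_cast hwp

end AuxMv

section AuxPS

variable {A : Type*} [CommRing A] [IsLocalRing A]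

lemma mr_mem (f : PowerSeries A) :
    f ∈ IsLocalRing.maximalIdeal (PowerSeries A) ↔
      PowerSeries.constantCoeff (R := A) f ∈ IsLocalRing.maximalIdeal A := by
  rw [IsLocalRing.mem_maximalIdeal, mem_nonunits_iff, PowerSeries.isUnit_iff_constantCoeff,
    IsLocalRing.mem_maximalIdeal, mem_nonunits_iff]

/-- the ideal of power series whose `i`-th coefficient lies in `m^(k-i)` -/
def Tideal (k : ℕ) : Ideal (PowerSeries A) where
  carrier := {f | ∀ i, PowerSeries.coeff (R := A) i f ∈ (IsLocalRing.maximalIdeal A) ^ (k - i)}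
  add_mem' := fun ha hb i => by
    rw [map_add]; exact Ideal.add_mem _ (ha i) (hb i)
  zero_mem' := fun i => by simp
  smul_mem' := fun r f hf i => by
    rw [smul_eq_mul, PowerSeries.coeff_mul]
    refine Ideal.sum_mem _ fun p hp => ?_
    have hab : p.1 + p.2 = i := Finset.HasAntidiagonal.mem_antidiagonal.mp hp
    exact Ideal.mul_mem_left _ _ (Ideal.pow_le_pow_right (by omega) (hf p.2))

lemma mem_Tideal {k : ℕ} {f : PowerSeries A} :
    f ∈ (Tideal k : Ideal (PowerSeries A)) ↔
      ∀ i, PowerSeries.coeff (R := A) i f ∈ (IsLocalRing.maximalIdeal A) ^ (k - i) := Iff.rfl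

lemma Tideal_mul {j l : ℕ} {f g : PowerSeries A} (hf : f ∈ (Tideal j : Ideal (PowerSeries A)))
    (hg : g ∈ (Tideal l : Ideal (PowerSeries A))) :
    f * g ∈ (Tideal (j + l) : Ideal (PowerSeries A)) := by
  intro i
  rw [PowerSeries.coeff_mul]
  refine Ideal.sum_mem _ fun p hp => ?_
  have hab : p.1 + p.2 = i := Finset.HasAntidiagonal.mem_antidiagonal.mp hp
  have := Ideal.mul_mem_mul (hf p.1) (hg p.2)
  rw [← pow_add] at this
  exact Ideal.pow_le_pow_right (by omega) this

lemma pow_le_Tideal (k : ℕ) :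
    (IsLocalRing.maximalIdeal (PowerSeries A)) ^ k ≤ Tideal k := by
  induction k with
  | zero => intro f _ i; simp
  | succ k ih =>
      rw [pow_succ]
      refine Ideal.mul_le.mpr fun f hf g hg => ?_
      refine Tideal_mul (ih hf) fun i => ?_
      match i with
      | 0 =>
          simpa [PowerSeries.coeff_zero_eq_constantCoeff] using (mr_mem g).mp hg
      | (i + 1) => simp

lemma coeff_mem_of_mem_pow {k : ℕ} {f : PowerSeries A}
    (h : f ∈ (IsLocalRing.maximalIdeal (PowerSeries A)) ^ k) (i : ℕ) :
    PowerSeries.coeff (R := A) i f ∈ (IsLocalRing.maximalIdeal A) ^ (k - i) :=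
  pow_le_Tideal k h i

lemma C_mem_pow {a : A} {j : ℕ} (ha : a ∈ (IsLocalRing.maximalIdeal A) ^ j) :
    (PowerSeries.C (R := A) a) ∈ (IsLocalRing.maximalIdeal (PowerSeries A)) ^ j := by
  have h2 : Ideal.map (PowerSeries.C (R := A)) (IsLocalRing.maximalIdeal A) ≤
      IsLocalRing.maximalIdeal (PowerSeries A) := by
    refine Ideal.map_le_iff_le_comap.mpr fun b hb => ?_
    rw [Ideal.mem_comap, mr_mem]
    simpa using hb
  have h1 : (PowerSeries.C (R := A) a) ∈ Ideal.map (PowerSeries.C (R := A)) ((IsLocalRing.maximalIdeal A) ^ j) :=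
    Ideal.mem_map_of_mem _ ha
  rw [Ideal.map_pow] at h1
  exact Ideal.pow_right_mono h2 j h1

lemma X_mem_mr : (PowerSeries.X : PowerSeries A) ∈ IsLocalRing.maximalIdeal (PowerSeries A) := by
  rw [mr_mem]
  simp

lemma mem_pow_of_coeff_mem {k : ℕ} {f : PowerSeries A}
    (h : ∀ i, PowerSeries.coeff (R := A) i f ∈ (IsLocalRing.maximalIdeal A) ^ (k - i)) :
    f ∈ (IsLocalRing.maximalIdeal (PowerSeries A)) ^ k := by
  set P : PowerSeries A := ∑ i ∈ Finset.range k, PowerSeries.C (R := A) (PowerSeries.coeff (R := A) i f) *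
    (PowerSeries.X : PowerSeries A) ^ i with hP
  have hcoeffP : ∀ j, j < k → PowerSeries.coeff (R := A) j P = PowerSeries.coeff (R := A) j f := by
    intro j hj
    rw [hP, map_sum]
    rw [Finset.sum_eq_single j]
    · rw [PowerSeries.coeff_C_mul_X_pow, if_pos rfl]
    · intro i _ hij
      rw [PowerSeries.coeff_C_mul_X_pow, if_neg (Ne.symm hij)]
    · intro hj'
      exact absurd (Finset.mem_range.mpr hj) hj'
  have htail : f - P ∈ (IsLocalRing.maximalIdeal (PowerSeries A)) ^ k := by
    have hdvd : (PowerSeries.X : PowerSeries A) ^ k ∣ f - P := by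
      rw [PowerSeries.X_pow_dvd_iff]
      intro m hm
      rw [map_sub, hcoeffP m hm, sub_self]
    obtain ⟨r, hr⟩ := hdvd
    rw [hr]
    exact Ideal.mul_mem_right _ _ (Ideal.pow_mem_pow X_mem_mr k)
  have hsum : P ∈ (IsLocalRing.maximalIdeal (PowerSeries A)) ^ k := by
    refine Ideal.sum_mem _ fun i hi => ?_
    have hi' : i < k := Finset.mem_range.mp hi
    have h1 := C_mem_pow (h i)
    have h2 := Ideal.pow_mem_pow (X_mem_mr (A := A)) i
    have h3 := Ideal.mul_mem_mul h1 h2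
    rw [← pow_add] at h3
    have : k - i + i = k := by omega
    rwa [this] at h3
  have : f = P + (f - P) := by ring
  rw [this]
  exact Ideal.add_mem _ hsum htail

end AuxPS

theorem idealOrd_gt_iff {A : Type*} [CommRing A] (I J : Ideal A) (N : ℕ) :
    (N : ℕ∞) < idealOrd I J ↔ J ≤ I ^ (N + 1) := by
  constructor
  · intro h
    obtain ⟨x, hx, hNx⟩ := lt_sSup_iff.mp h
    obtain ⟨k, hk, rfl⟩ := hx
    have hk' : N + 1 ≤ k := by simp only [] at hNx; exact_mod_cast hNx
    exact le_trans hk (Ideal.pow_le_pow_right hk')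
  · intro h
    refine lt_of_lt_of_le ?_ (le_sSup ⟨N + 1, h, rfl⟩)
    show (N : ℕ∞) < ((N + 1 : ℕ) : ℕ∞)
    exact_mod_cast Nat.lt_succ_self N

theorem le_pow_of_idealOrd_eq {A : Type*} [CommRing A] {I J : Ideal A} {c : ℕ}
    (h : idealOrd I J = (c : ℕ∞)) : J ≤ I ^ c := by
  match c with
  | 0 => simp
  | (m + 1) =>
      refine (idealOrd_gt_iff I J m).mp ?_
      rw [h]
      exact_mod_cast Nat.lt_succ_self m

theorem not_le_pow_of_idealOrd_eq {A : Type*} [CommRing A] {I J : Ideal A} {c : ℕ}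
    (h : idealOrd I J = (c : ℕ∞)) : ¬ J ≤ I ^ (c + 1) := by
  intro hle
  have := (idealOrd_gt_iff I J c).mpr hle
  rw [h] at this
  exact lt_irrefl _ this


lemma ideal_sum_le {A : Type*} [CommRing A] (s : Finset ℕ) (f : ℕ → Ideal A) (N : Ideal A)
    (h : ∀ i ∈ s, f i ≤ N) : ∑ j ∈ s, f j ≤ N := by
  classical
  induction s using Finset.induction with
  | empty => simp
  | insert _ _ hx ih =>
      rw [Finset.sum_insert hx, Submodule.add_eq_sup]
      exact sup_le (h _ (by simp)) (ih fun i hi => h i (by simp [hi]))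

/-- Let `J ⊆ R = 𝕂[[z,x₁,…,xₙ]]` be an ideal of order `c` with `1 ≤ c < ∞`, and let
`K = coeff_{V(z)}(J)` be its coefficient ideal.  Then `ord K > c!` if and only if
`J ≡ (z^c)` modulo `m_R^{c+1}`, i.e. `J + m_R^{c+1} = (z^c) + m_R^{c+1}`. -/
theorem coeff_ideal_order_gt_factorial_iff {𝕂 : Type*} [Field 𝕂] {n : ℕ}
    (J : Ideal (PowerSeries (MvPowerSeries (Fin n) 𝕂))) (c : ℕ) (hc1 : 1 ≤ c)
    (hc : idealOrd (IsLocalRing.maximalIdeal (PowerSeries (MvPowerSeries (Fin n) 𝕂))) J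
      = (c : ℕ∞)) :
    idealOrd (IsLocalRing.maximalIdeal (MvPowerSeries (Fin n) 𝕂)) (coeffIdeal J c)
        > (c.factorial : ℕ∞)
      ↔ J ⊔ (IsLocalRing.maximalIdeal (PowerSeries (MvPowerSeries (Fin n) 𝕂))) ^ (c + 1)
          = Ideal.span {(PowerSeries.X : PowerSeries (MvPowerSeries (Fin n) 𝕂)) ^ c}
            ⊔ (IsLocalRing.maximalIdeal (PowerSeries (MvPowerSeries (Fin n) 𝕂))) ^ (c + 1) := by
  classical
  have hdvd : ∀ i, i < c → (c - i) * (c.factorial / (c - i)) = c.factorial := fun i hi =>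
    Nat.mul_div_cancel' (Nat.dvd_factorial (by omega) (by omega))
  have hone : ∀ i, i < c → 1 ≤ c.factorial / (c - i) := fun i hi =>
    (Nat.one_le_div_iff (by omega)).mpr (le_trans (by omega) (Nat.self_le_factorial c))
  have hJc1 : ¬ J ≤ (IsLocalRing.maximalIdeal (PowerSeries (MvPowerSeries (Fin n) 𝕂))) ^ (c + 1) :=
    not_le_pow_of_idealOrd_eq hc
  -- generic fact used in both directions of the "⇒" part
  rw [gt_iff_lt, idealOrd_gt_iff]
  constructor
  · -- K small ⇒ J ≡ (X^c)
    intro hK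
    have hspan1 : ∀ i, i < c →
        Ideal.span ((PowerSeries.coeff (R := MvPowerSeries (Fin n) 𝕂) i) '' J) ≤
          (IsLocalRing.maximalIdeal (MvPowerSeries (Fin n) 𝕂)) ^ (c - i + 1) := by
      intro i hi
      have hsummand : (Ideal.span ((PowerSeries.coeff (R := MvPowerSeries (Fin n) 𝕂) i) '' J)) ^
            (c.factorial / (c - i)) ≤
          (IsLocalRing.maximalIdeal (MvPowerSeries (Fin n) 𝕂)) ^ (c.factorial + 1) := by
        refine le_trans ?_ hK
        exact Finset.single_le_sum
          (f := fun i => (Ideal.span ((PowerSeries.coeff (R := MvPowerSeries (Fin n) 𝕂) i) '' J)) ^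
            (c.factorial / (c - i)))
          (fun j _ => zero_le) (Finset.mem_range.mpr hi)
      intro g hg
      have hge : g ^ (c.factorial / (c - i)) ∈
          (IsLocalRing.maximalIdeal (MvPowerSeries (Fin n) 𝕂)) ^ (c.factorial + 1) :=
        hsummand (Ideal.pow_mem_pow hg (c.factorial / (c - i)))
      have := order_ge_of_pow_mem (g := g) (e := c.factorial / (c - i)) (w := c - i)
        (N := c.factorial + 1) (hone i hi)
        (by rw [mul_comm, hdvd i hi]; omega) hge
      exact this
    have hcoeffJ : ∀ f ∈ J, ∀ i, i < c →
        PowerSeries.coeff (R := MvPowerSeries (Fin n) 𝕂) i f ∈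
          (IsLocalRing.maximalIdeal (MvPowerSeries (Fin n) 𝕂)) ^ (c - i + 1) :=
      fun f hf i hi => hspan1 i hi (Ideal.subset_span ⟨f, hf, rfl⟩)
    have hsubgen : ∀ f ∈ J,
        f - PowerSeries.C (R := MvPowerSeries (Fin n) 𝕂)
            (PowerSeries.coeff (R := MvPowerSeries (Fin n) 𝕂) c f) * PowerSeries.X ^ c ∈
          (IsLocalRing.maximalIdeal (PowerSeries (MvPowerSeries (Fin n) 𝕂))) ^ (c + 1) := by
      intro f hf
      apply mem_pow_of_coeff_mem
      intro i
      rcases lt_trichotomy i c with hi | heq | hi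
      · rw [map_sub, PowerSeries.coeff_C_mul_X_pow, if_neg (by omega), sub_zero,
          show c + 1 - i = c - i + 1 from by omega]
        exact hcoeffJ f hf i hi
      · rw [heq, map_sub, PowerSeries.coeff_C_mul_X_pow, if_pos rfl, sub_self]
        exact Submodule.zero_mem _
      · rw [show c + 1 - i = 0 from by omega, pow_zero, Ideal.one_eq_top]
        exact Submodule.mem_top
    have hJle : J ≤ Ideal.span {(PowerSeries.X : PowerSeries (MvPowerSeries (Fin n) 𝕂)) ^ c}
        ⊔ (IsLocalRing.maximalIdeal (PowerSeries (MvPowerSeries (Fin n) 𝕂))) ^ (c + 1) := by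
      intro f hf
      have hdecomp : f = PowerSeries.C (R := MvPowerSeries (Fin n) 𝕂)
          (PowerSeries.coeff (R := MvPowerSeries (Fin n) 𝕂) c f) * PowerSeries.X ^ c +
          (f - PowerSeries.C (R := MvPowerSeries (Fin n) 𝕂)
            (PowerSeries.coeff (R := MvPowerSeries (Fin n) 𝕂) c f) * PowerSeries.X ^ c) := by ring
      rw [hdecomp]
      refine Ideal.add_mem _ (Ideal.mem_sup_left ?_) (Ideal.mem_sup_right (hsubgen f hf))
      exact Ideal.mem_span_singleton.mpr (Dvd.intro_left _ rfl)
    obtain ⟨f₀, hf₀J, hf₀⟩ : ∃ f ∈ J,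
        f ∉ (IsLocalRing.maximalIdeal (PowerSeries (MvPowerSeries (Fin n) 𝕂))) ^ (c + 1) := by
      by_contra hcon
      push_neg at hcon
      exact hJc1 fun f hf => hcon f hf
    have hu : PowerSeries.coeff (R := MvPowerSeries (Fin n) 𝕂) c f₀ ∉
        IsLocalRing.maximalIdeal (MvPowerSeries (Fin n) 𝕂) := by
      intro humem
      apply hf₀
      apply mem_pow_of_coeff_mem
      intro i
      rcases lt_trichotomy i c with hi | heq | hi
      · rw [show c + 1 - i = c - i + 1 from by omega]
        exact hcoeffJ f₀ hf₀J i hi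
      · rw [heq, show c + 1 - c = 1 from by omega, pow_one]
        exact humem
      · rw [show c + 1 - i = 0 from by omega, pow_zero, Ideal.one_eq_top]
        exact Submodule.mem_top
    have huu : IsUnit (PowerSeries.C (R := MvPowerSeries (Fin n) 𝕂)
        (PowerSeries.coeff (R := MvPowerSeries (Fin n) 𝕂) c f₀)) := by
      rw [PowerSeries.isUnit_iff_constantCoeff, PowerSeries.constantCoeff_C]
      by_contra h'
      exact hu ((IsLocalRing.mem_maximalIdeal _).mpr h')
    obtain ⟨v, hv⟩ := huu.exists_left_inv
    have hXc : (PowerSeries.X : PowerSeries (MvPowerSeries (Fin n) 𝕂)) ^ c ∈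
        J ⊔ (IsLocalRing.maximalIdeal (PowerSeries (MvPowerSeries (Fin n) 𝕂))) ^ (c + 1) := by
      have hkey : (PowerSeries.X : PowerSeries (MvPowerSeries (Fin n) 𝕂)) ^ c =
          v * f₀ - v * (f₀ - PowerSeries.C (R := MvPowerSeries (Fin n) 𝕂)
            (PowerSeries.coeff (R := MvPowerSeries (Fin n) 𝕂) c f₀) * PowerSeries.X ^ c) := by
        rw [mul_sub, sub_sub_cancel, ← mul_assoc, hv, one_mul]
      rw [hkey]
      exact Ideal.sub_mem _ (Ideal.mem_sup_left (Ideal.mul_mem_left _ v hf₀J))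
        (Ideal.mem_sup_right (Ideal.mul_mem_left _ v (hsubgen f₀ hf₀J)))
    apply le_antisymm
    · exact sup_le (le_trans hJle (le_refl _)) le_sup_right
    · refine sup_le ?_ le_sup_right
      rw [Ideal.span_le, Set.singleton_subset_iff]
      exact hXc
  · -- J ≡ (X^c) ⇒ K small
    intro hJ
    show coeffIdeal J c ≤ _
    unfold coeffIdeal
    apply ideal_sum_le
    intro i hi
    have hi' : i < c := Finset.mem_range.mp hi
    have hspan : Ideal.span ((PowerSeries.coeff (R := MvPowerSeries (Fin n) 𝕂) i) '' J) ≤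
        (IsLocalRing.maximalIdeal (MvPowerSeries (Fin n) 𝕂)) ^ (c + 1 - i) := by
      rw [Ideal.span_le]
      rintro _ ⟨f, hf, rfl⟩
      have hfmem : f ∈ Ideal.span {(PowerSeries.X : PowerSeries (MvPowerSeries (Fin n) 𝕂)) ^ c}
          ⊔ (IsLocalRing.maximalIdeal (PowerSeries (MvPowerSeries (Fin n) 𝕂))) ^ (c + 1) := by
        rw [← hJ]
        exact Ideal.mem_sup_left hf
      obtain ⟨p, hp, h', hh, rfl⟩ := Submodule.mem_sup.mp hfmem
      have hp0 : PowerSeries.coeff (R := MvPowerSeries (Fin n) 𝕂) i p = 0 := by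
        obtain ⟨r, hr⟩ := Ideal.mem_span_singleton.mp hp
        rw [hr]
        have : (PowerSeries.X : PowerSeries (MvPowerSeries (Fin n) 𝕂)) ^ c ∣
            PowerSeries.X ^ c * r := Dvd.intro _ rfl
        exact PowerSeries.X_pow_dvd_iff.mp this i hi'
      rw [map_add, hp0, zero_add]
      exact coeff_mem_of_mem_pow hh i
    have step1 : (Ideal.span ((PowerSeries.coeff (R := MvPowerSeries (Fin n) 𝕂) i) '' J)) ^
          (c.factorial / (c - i)) ≤
        ((IsLocalRing.maximalIdeal (MvPowerSeries (Fin n) 𝕂)) ^ (c + 1 - i)) ^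
          (c.factorial / (c - i)) :=
      Ideal.pow_right_mono hspan _
    refine le_trans step1 ?_
    rw [← pow_mul]
    apply Ideal.pow_le_pow_right
    have h1 := hdvd i hi'
    have h2 := hone i hi'
    have h3 : (c + 1 - i) * (c.factorial / (c - i)) =
        (c - i) * (c.factorial / (c - i)) + (c.factorial / (c - i)) := by
      rw [show c + 1 - i = (c - i) + 1 from by omega]
      ring
    omega
end
end

section
/- In the situation of the coordinate change u = z − q with q ∈ 𝕂[x₁,…,xₙ] a nonzero homogeneous polynomial of positive degree: if c!·deg q < o and there exists an element f ∈ J that is z-regular of order c, then o₁ = c!·deg q, and in particular o₁ < o. Here J ⊆ R = 𝕂[[z,x₁,…,xₙ]] is an ideal of order c with 1 ≤ c < ∞, o = ord coeff_{V(z)}(J) and o₁ = ord coeff_{V(u)}(J). -/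
set_option synthInstance.maxHeartbeats 400000
set_option maxHeartbeats 1000000

noncomputable section

/-- The coefficient ideal `K₁ = coeff_{V(u)}(J) = Σ_{i<c} (f̃_i : f ∈ J)^{c!/(c−i)}` of `J`
with respect to `V(u)`, computed from a function `E` assigning to each `f ∈ R` the family of
coefficients of its `u`-expansion. -/
def coeffIdealE {𝕂 : Type*} [Field 𝕂] {n : ℕ}
    (E : PowerSeries (MvPowerSeries (Fin n) 𝕂) → ℕ → MvPowerSeries (Fin n) 𝕂)
    (J : Ideal (PowerSeries (MvPowerSeries (Fin n) 𝕂))) (c : ℕ) :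
    Ideal (MvPowerSeries (Fin n) 𝕂) :=
  ∑ i ∈ Finset.range c, (Ideal.span ((fun f => E f i) '' J)) ^ (c.factorial / (c - i))

/-- An element `f = Σ_{i≥0} f_i z^i` of `R = Q[[z]]` is `z`-regular of order `c` if
`f_i(0) = 0` for all `i < c` and `f_c(0) ≠ 0`. -/
def zRegular {𝕂 : Type*} [Field 𝕂] {n : ℕ}
    (f : PowerSeries (MvPowerSeries (Fin n) 𝕂)) (c : ℕ) : Prop :=
  (∀ i < c, MvPowerSeries.constantCoeff (σ := Fin n) (R := 𝕂)
      (PowerSeries.coeff (R := MvPowerSeries (Fin n) 𝕂) i f) = 0) ∧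
    MvPowerSeries.constantCoeff (σ := Fin n) (R := 𝕂)
      (PowerSeries.coeff (R := MvPowerSeries (Fin n) 𝕂) c f) ≠ 0

namespace CO

open MvPowerSeries

variable {𝕂 : Type*} [Field 𝕂] {n : ℕ}


lemma degree_add (a b : Fin n →₀ ℕ) : (a + b).degree = a.degree + b.degree := by
  simp only [Finsupp.degree_eq_weight_one, map_add]

/-- The ideal of power series all of whose coefficients in degree `< k` vanish. -/
def L (𝕂 : Type*) [Field 𝕂] (n k : ℕ) : Ideal (MvPowerSeries (Fin n) 𝕂) where
  carrier := {f | ∀ e : Fin n →₀ ℕ, e.degree < k → MvPowerSeries.coeff (R := 𝕂) e f = 0}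
  add_mem' := fun ha hb e he => by simp [map_add, ha e he, hb e he]
  zero_mem' := fun e he => by simp
  smul_mem' := by
    intro r f hf e he
    rw [smul_eq_mul, MvPowerSeries.coeff_mul]
    apply Finset.sum_eq_zero
    rintro ⟨a, b⟩ hab
    rw [Finset.HasAntidiagonal.mem_antidiagonal] at hab
    have hb : b.degree < k := by
      have : a.degree + b.degree = e.degree := by rw [← degree_add, hab]
      omega
    simp [hf b hb]

lemma mem_L {k : ℕ} {f : MvPowerSeries (Fin n) 𝕂} :
    f ∈ L 𝕂 n k ↔ ∀ e : Fin n →₀ ℕ, e.degree < k → MvPowerSeries.coeff (R := 𝕂) e f = 0 := Iff.rfl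

lemma L_anti {a b : ℕ} (h : a ≤ b) : L 𝕂 n b ≤ L 𝕂 n a := by
  intro f hf e he; exact hf e (lt_of_lt_of_le he h)

lemma mul_mem_L {a b : ℕ} {f g : MvPowerSeries (Fin n) 𝕂} (hf : f ∈ L 𝕂 n a)
    (hg : g ∈ L 𝕂 n b) : f * g ∈ L 𝕂 n (a + b) := by
  intro e he
  rw [MvPowerSeries.coeff_mul]
  apply Finset.sum_eq_zero
  rintro ⟨e1, e2⟩ hab
  rw [Finset.HasAntidiagonal.mem_antidiagonal] at hab
  have hdeg : e1.degree + e2.degree = e.degree := by rw [← degree_add, hab]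
  rcases lt_or_ge e1.degree a with h1 | h1
  · simp [hf e1 h1]
  · have h2 : e2.degree < b := by omega
    simp [hg e2 h2]

lemma pow_mem_L {a m : ℕ} {f : MvPowerSeries (Fin n) 𝕂} (hf : f ∈ L 𝕂 n a) :
    f ^ m ∈ L 𝕂 n (m * a) := by
  induction m with
  | zero => exact fun e he => absurd he (by simp)
  | succ m ih =>
      have := mul_mem_L ih hf
      rw [pow_succ]
      convert this using 2
      ring

lemma mem_maximalIdeal_iff {f : MvPowerSeries (Fin n) 𝕂} :
    f ∈ IsLocalRing.maximalIdeal (MvPowerSeries (Fin n) 𝕂) ↔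
      MvPowerSeries.constantCoeff (σ := Fin n) (R := 𝕂) f = 0 := by
  rw [IsLocalRing.mem_maximalIdeal, mem_nonunits_iff, MvPowerSeries.isUnit_iff_constantCoeff,
    isUnit_iff_ne_zero, not_not]

lemma maximalIdeal_le_L1 :
    IsLocalRing.maximalIdeal (MvPowerSeries (Fin n) 𝕂) ≤ L 𝕂 n 1 := by
  intro f hf e he
  have he0 : e = 0 := by
    rwa [Nat.lt_one_iff, Finsupp.degree_eq_zero_iff] at he
  rw [he0]
  rw [mem_maximalIdeal_iff] at hf
  simpa [MvPowerSeries.coeff_zero_eq_constantCoeff] using hf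

lemma pow_maximalIdeal_le_L (k : ℕ) :
    (IsLocalRing.maximalIdeal (MvPowerSeries (Fin n) 𝕂)) ^ k ≤ L 𝕂 n k := by
  induction k with
  | zero => intro f _ e he; omega
  | succ k ih =>
      rw [pow_succ]
      refine Ideal.mul_le.mpr fun r hr s hs => ?_
      exact mul_mem_L (ih hr) (maximalIdeal_le_L1 hs)









lemma L_succ_le (k : ℕ) :
    L 𝕂 n (k + 1) ≤ IsLocalRing.maximalIdeal (MvPowerSeries (Fin n) 𝕂) * L 𝕂 n k := by
  classical
  intro f hf
  rw [mem_L] at hf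
  -- define the splitting
  set g : Fin n → MvPowerSeries (Fin n) 𝕂 := fun i e =>
    if (e + Finsupp.single i 1).support.min = (i : WithTop (Fin n))
      then MvPowerSeries.coeff (R := 𝕂) (e + Finsupp.single i 1) f else 0 with hg
  have hgcoeff : ∀ i e, MvPowerSeries.coeff (R := 𝕂) e (g i) =
      if (e + Finsupp.single i 1).support.min = (i : WithTop (Fin n))
        then MvPowerSeries.coeff (R := 𝕂) (e + Finsupp.single i 1) f else 0 := fun i e => rfl
  have hsplit : f = ∑ i : Fin n, X i * g i := by
    apply MvPowerSeries.ext
    intro e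
    rw [map_sum]
    by_cases he : e = 0
    · subst he
      have : ∀ i : Fin n, MvPowerSeries.coeff (R := 𝕂) 0 (X i * g i) = 0 := by
        intro i
        rw [MvPowerSeries.X, coeff_monomial_mul, if_neg]
        simp [Finsupp.single_le_iff]
      simp only [this, Finset.sum_const_zero]
      exact hf 0 (by simp)
    · have hne : e.support.Nonempty := by
        rwa [Finsupp.support_nonempty_iff]
      set i₀ := e.support.min' hne with hi₀
      have hi₀mem : i₀ ∈ e.support := Finset.min'_mem _ _
      have hle : Finsupp.single i₀ 1 ≤ e := by
        rw [Finsupp.single_le_iff]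
        exact Nat.one_le_iff_ne_zero.mpr (Finsupp.mem_support_iff.mp hi₀mem)
      have hmin : e.support.min = (i₀ : WithTop (Fin n)) := (Finset.coe_min' hne).symm
      rw [Finset.sum_eq_single i₀]
      · rw [MvPowerSeries.X, coeff_monomial_mul, if_pos hle, hgcoeff,
          tsub_add_cancel_of_le hle, if_pos hmin, one_mul]
      · intro i _ hii
        rw [MvPowerSeries.X, coeff_monomial_mul]
        by_cases hle' : Finsupp.single i 1 ≤ e
        · rw [if_pos hle', hgcoeff, tsub_add_cancel_of_le hle', if_neg, mul_zero]
          rw [hmin]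
          exact fun h => hii (by exact_mod_cast h.symm)
        · rw [if_neg hle']
      · intro h
        exact absurd (Finset.mem_univ i₀) h
  rw [hsplit]
  apply Ideal.sum_mem
  intro i _
  apply Ideal.mul_mem_mul
  · rw [mem_maximalIdeal_iff]
    simp
  · rw [mem_L]
    intro e he
    rw [hgcoeff]
    by_cases hm : (e + Finsupp.single i 1).support.min = (i : WithTop (Fin n))
    · rw [if_pos hm]
      apply hf
      have h1 : (Finsupp.single i (1:ℕ)).degree = 1 := by
        exact Finsupp.degree_single i 1
      rw [degree_add, h1]
      omega
    · rw [if_neg hm]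









/-- `f` has order exactly `s`. -/
def OrdE (s : ℕ) (f : MvPowerSeries (Fin n) 𝕂) : Prop :=
  f ∈ L 𝕂 n s ∧ ∃ e : Fin n →₀ ℕ, e.degree = s ∧ MvPowerSeries.coeff (R := 𝕂) e f ≠ 0

lemma OrdE.mul {s t : ℕ} {f g : MvPowerSeries (Fin n) 𝕂} (hf : OrdE s f) (hg : OrdE t g) :
    OrdE (s + t) (f * g) := by
  classical
  obtain ⟨hfL, hfe⟩ := hf
  obtain ⟨hgL, hge⟩ := hg
  constructor
  · exact mul_mem_L hfL hgL
  · -- choose lex-maximal exponents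
    set Tf : Set (Fin n →₀ ℕ) := {e | e.degree = s ∧ MvPowerSeries.coeff (R := 𝕂) e f ≠ 0} with hTf
    set Tg : Set (Fin n →₀ ℕ) := {e | e.degree = t ∧ MvPowerSeries.coeff (R := 𝕂) e g ≠ 0} with hTg
    have hTffin : Tf.Finite := by
      apply (Finsupp.finite_of_degree_le s).subset
      intro e he; exact le_of_eq he.1
    have hTgfin : Tg.Finite := by
      apply (Finsupp.finite_of_degree_le t).subset
      intro e he; exact le_of_eq he.1
    obtain ⟨e₀, he₀T, he₀max⟩ : ∃ a ∈ Tf, ∀ a' ∈ Tf, toLex a ≤ toLex a' → toLex a = toLex a' := by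
      obtain ⟨i, hi⟩ := hTffin.exists_maximalFor (toLex : (Fin n →₀ ℕ) → Lex (Fin n →₀ ℕ)) Tf hfe
      exact ⟨i, hi.1, fun a' ha h => le_antisymm h (hi.2 ha h)⟩
    obtain ⟨e₁, he₁T, he₁max⟩ : ∃ a ∈ Tg, ∀ a' ∈ Tg, toLex a ≤ toLex a' → toLex a = toLex a' := by
      obtain ⟨i, hi⟩ := hTgfin.exists_maximalFor (toLex : (Fin n →₀ ℕ) → Lex (Fin n →₀ ℕ)) Tg hge
      exact ⟨i, hi.1, fun a' ha h => le_antisymm h (hi.2 ha h)⟩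
    refine ⟨e₀ + e₁, by rw [degree_add, he₀T.1, he₁T.1], ?_⟩
    rw [MvPowerSeries.coeff_mul, Finset.sum_eq_single (e₀, e₁)]
    · exact mul_ne_zero he₀T.2 he₁T.2
    · rintro ⟨a, b⟩ hab hne
      rw [Finset.HasAntidiagonal.mem_antidiagonal] at hab
      by_cases ha0 : MvPowerSeries.coeff (R := 𝕂) a f = 0
      · simp [ha0]
      by_cases hb0 : MvPowerSeries.coeff (R := 𝕂) b g = 0
      · simp [hb0]
      exfalso
      have hda : a.degree = s := by
        have h1 : ¬ a.degree < s := fun h => ha0 (mem_L.mp hfL a h)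
        have h2 : ¬ b.degree < t := fun h => hb0 (mem_L.mp hgL b h)
        have h3 : a.degree + b.degree = s + t := by
          rw [← degree_add, hab, degree_add, he₀T.1, he₁T.1]
        omega
      have hdb : b.degree = t := by
        have h3 : a.degree + b.degree = s + t := by
          rw [← degree_add, hab, degree_add, he₀T.1, he₁T.1]
        omega
      have haT : a ∈ Tf := ⟨hda, ha0⟩
      have hbT : b ∈ Tg := ⟨hdb, hb0⟩
      have hsum : toLex a + toLex b = toLex e₀ + toLex e₁ := by
        have : a + b = e₀ + e₁ := hab
        exact congrArg toLex this
      -- trichotomies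
      rcases lt_trichotomy (toLex a) (toLex e₀) with h | h | h
      · rcases lt_trichotomy (toLex b) (toLex e₁) with h' | h' | h'
        · exact absurd hsum (by
            have := add_lt_add h h'
            exact ne_of_lt this)
        · have : a = e₀ := by
            have hb : b = e₁ := toLex.injective h'
            subst hb
            have : a + b = e₀ + b := hab
            exact add_right_cancel this
          exact absurd this (fun hh => hne (by rw [hh, show b = e₁ from toLex.injective h']))
        · have := he₁max b hbT (le_of_lt h')
          exact absurd (toLex.injective this) (by
            intro hh
            rw [hh] at h'
            exact lt_irrefl _ h')
      · have ha : a = e₀ := toLex.injective h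
        subst ha
        have hb : b = e₁ := add_left_cancel hab
        exact hne (by rw [hb])
      · have := he₀max a haT (le_of_lt h)
        exact absurd (toLex.injective this) (by
          intro hh
          rw [hh] at h
          exact lt_irrefl _ h)
    · intro hmem
      exfalso
      apply hmem
      rw [Finset.HasAntidiagonal.mem_antidiagonal]

lemma OrdE.pow {s m : ℕ} {f : MvPowerSeries (Fin n) 𝕂} (hf : OrdE s f) :
    OrdE (m * s) (f ^ m) := by
  induction m with
  | zero =>
      refine ⟨mem_L.mpr fun e he => absurd he (by simp), 0, by simp, ?_⟩
      simp
  | succ m ih =>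
      have := ih.mul hf
      rw [pow_succ]
      have h2 : (m + 1) * s = m * s + s := by ring
      rw [h2]
      exact this

lemma not_mem_L_of_ordE {s k : ℕ} {f : MvPowerSeries (Fin n) 𝕂} (hf : OrdE s f)
    (hk : s < k) : f ∉ L 𝕂 n k := by
  obtain ⟨_, e, hde, hce⟩ := hf
  intro hmem
  exact hce (mem_L.mp hmem e (by omega))

lemma mem_L_of_pow_mem {m s : ℕ} {f : MvPowerSeries (Fin n) 𝕂} (hm : 0 < m)
    (h : f ^ m ∈ L 𝕂 n (m * s + 1)) : f ∈ L 𝕂 n (s + 1) := by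
  classical
  by_contra hf
  rw [mem_L] at hf
  push_neg at hf
  obtain ⟨e, hde, hce⟩ := hf
  have hP : ∃ t, ∃ e : Fin n →₀ ℕ, e.degree = t ∧ MvPowerSeries.coeff (R := 𝕂) e f ≠ 0 :=
    ⟨e.degree, e, rfl, hce⟩
  set t₀ := Nat.find hP with ht₀
  obtain ⟨e₀, hde₀, hce₀⟩ := Nat.find_spec hP
  have ht₀le : t₀ ≤ e.degree := Nat.find_le ⟨e, rfl, hce⟩
  have hOrd : OrdE t₀ f := by
    refine ⟨mem_L.mpr fun e' he' => ?_, e₀, hde₀, hce₀⟩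
    by_contra hne
    exact Nat.find_min hP he' ⟨e', rfl, hne⟩
  have := hOrd.pow (m := m)
  exact not_mem_L_of_ordE this (by
    have : t₀ ≤ s := by omega
    calc m * t₀ ≤ m * s := Nat.mul_le_mul_left m this
    _ < m * s + 1 := by omega) h










-- The coefficient of z^j in u^i, where u = X - C qq.
lemma coeff_u_pow (qq : MvPowerSeries (Fin n) 𝕂) (i j : ℕ) :
    PowerSeries.coeff (R := MvPowerSeries (Fin n) 𝕂) j
        ((PowerSeries.X - PowerSeries.C (R := MvPowerSeries (Fin n) 𝕂) qq) ^ i) =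
      if j ≤ i then (-qq) ^ (i - j) * (i.choose j : MvPowerSeries (Fin n) 𝕂) else 0 := by
  classical
  have hu : (PowerSeries.X - PowerSeries.C (R := MvPowerSeries (Fin n) 𝕂) qq)
      = PowerSeries.X + PowerSeries.C (R := MvPowerSeries (Fin n) 𝕂) (-qq) := by
    rw [map_neg, sub_eq_add_neg]
  rw [hu, add_pow, map_sum]
  have hterm : ∀ k ∈ Finset.range (i + 1),
      PowerSeries.coeff (R := MvPowerSeries (Fin n) 𝕂) j
        (PowerSeries.X ^ k * PowerSeries.C (R := MvPowerSeries (Fin n) 𝕂) (-qq) ^ (i - k)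
          * (i.choose k : PowerSeries (MvPowerSeries (Fin n) 𝕂))) =
      if j = k then (-qq) ^ (i - k) * (i.choose k : MvPowerSeries (Fin n) 𝕂) else 0 := by
    intro k _
    rw [show ((i.choose k : ℕ) : PowerSeries (MvPowerSeries (Fin n) 𝕂))
        = PowerSeries.C (R := MvPowerSeries (Fin n) 𝕂) (i.choose k : MvPowerSeries (Fin n) 𝕂) by
      simp [map_natCast]]
    rw [PowerSeries.coeff_mul_C, mul_comm (PowerSeries.X ^ k), ← map_pow,
      PowerSeries.coeff_C_mul_X_pow, ite_mul, zero_mul]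
  rw [Finset.sum_congr rfl hterm]
  by_cases hj : j ≤ i
  · rw [Finset.sum_ite_eq (Finset.range (i+1)) j, if_pos (Finset.mem_range.mpr (by omega)),
      if_pos hj]
  · rw [if_neg hj]
    apply Finset.sum_eq_zero
    intro k hk
    rw [Finset.mem_range] at hk
    rw [if_neg (by omega)]



lemma alt_sum_choose {j c : ℕ} (hjc : j < c) :
    ∑ i ∈ Finset.Ioc j c, (-1:ℤ)^(i-j) * (c.choose i) * (i.choose j) = -(c.choose j) := by
  have hIcc : ∑ i ∈ Finset.Icc j c, (-1:ℤ)^(i-j) * (c.choose i) * (i.choose j) = 0 := by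
    have hre : ∀ i ∈ Finset.Icc j c, (-1:ℤ)^(i-j) * (c.choose i) * (i.choose j)
        = (c.choose j : ℤ) * ((-1:ℤ)^(i-j) * ((c-j).choose (i-j))) := by
      intro i hi
      rw [Finset.mem_Icc] at hi
      have := Nat.choose_mul (n := c) hi.1
      have hcast : (c.choose i : ℤ) * (i.choose j) = (c.choose j : ℤ) * ((c-j).choose (i-j)) := by
        exact_mod_cast congrArg (Nat.cast : ℕ → ℤ) this
      ring_nf
      rw [hcast]
    rw [Finset.sum_congr rfl hre, ← Finset.mul_sum]
    have : ∑ i ∈ Finset.Icc j c, (-1:ℤ)^(i-j) * ((c-j).choose (i-j)) = 0 := by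
      have h1 : Finset.Icc j c = Finset.Ico j (c+1) := by
        rw [Finset.Ico_add_one_right_eq_Icc]
      rw [h1, Finset.sum_Ico_eq_sum_range]
      have h2 : c + 1 - j = (c - j) + 1 := by omega
      rw [h2]
      have h3 : ∀ k ∈ Finset.range ((c-j)+1), (-1:ℤ)^((j+k)-j) * ((c-j).choose ((j+k)-j))
          = (-1:ℤ)^k * ((c-j).choose k) := by
        intro k _
        have hk : (j + k) - j = k := by omega
        rw [hk]
      rw [Finset.sum_congr rfl h3]
      exact Int.alternating_sum_range_choose_of_ne (by omega)
    rw [this, mul_zero]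
  have hsplit : ∑ i ∈ Finset.Icc j c, (-1:ℤ)^(i-j) * (c.choose i) * (i.choose j)
      = (-1:ℤ)^(j-j) * (c.choose j) * (j.choose j)
        + ∑ i ∈ Finset.Ioc j c, (-1:ℤ)^(i-j) * (c.choose i) * (i.choose j) := by
    rw [← Finset.sum_Ioc_add_eq_sum_Icc (le_of_lt hjc)]
    ring
  rw [hsplit] at hIcc
  simp at hIcc
  omega












section Main

variable (q : MvPolynomial (Fin n) 𝕂) (d : ℕ)

lemma coe_q_mem_L (hqd : q.IsHomogeneous d) : (↑q : MvPowerSeries (Fin n) 𝕂) ∈ L 𝕂 n d := by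
  rw [mem_L]
  intro e he
  rw [MvPolynomial.coeff_coe]
  exact hqd.coeff_eq_zero (by omega)

/-- The coefficient `A i j` of `z^j` in `u^i`. -/
def A (qq : MvPowerSeries (Fin n) 𝕂) (i j : ℕ) : MvPowerSeries (Fin n) 𝕂 :=
  if j ≤ i then (-qq) ^ (i - j) * (i.choose j : MvPowerSeries (Fin n) 𝕂) else 0

lemma A_mem_L (hqd : q.IsHomogeneous d) {i j : ℕ} :
    A (↑q : MvPowerSeries (Fin n) 𝕂) i j ∈ L 𝕂 n ((i - j) * d) := by
  rw [A]
  split_ifs with h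
  · exact Ideal.mul_mem_right _ _ (pow_mem_L (neg_mem (coe_q_mem_L q d hqd)))
  · exact Ideal.zero_mem _

variable (u : PowerSeries (MvPowerSeries (Fin n) 𝕂)) (c : ℕ)
  (E : PowerSeries (MvPowerSeries (Fin n) 𝕂) → ℕ → MvPowerSeries (Fin n) 𝕂)

/-- Master relation: the coefficients of `f` in terms of the `u`-expansion coefficients. -/
lemma master (hqd : q.IsHomogeneous d)
    (hu : u = PowerSeries.X -
      PowerSeries.C (R := MvPowerSeries (Fin n) 𝕂) (↑q : MvPowerSeries (Fin n) 𝕂))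
    (f : PowerSeries (MvPowerSeries (Fin n) 𝕂))
    (hf : f - ∑ i ∈ Finset.range (c+1),
      PowerSeries.C (R := MvPowerSeries (Fin n) 𝕂) (E f i) * u ^ i ∈ Ideal.span {u ^ (c+1)}) :
    ∃ rem : ℕ → MvPowerSeries (Fin n) 𝕂,
      (∀ j, j ≤ c → rem j ∈ L 𝕂 n ((c + 1 - j) * d)) ∧
      (∀ j, j ≤ c → PowerSeries.coeff (R := MvPowerSeries (Fin n) 𝕂) j f =
        ∑ i ∈ Finset.range (c+1), E f i * A (↑q : MvPowerSeries (Fin n) 𝕂) i j + rem j) := by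
  classical
  set h := Classical.choose (Ideal.mem_span_singleton.mp hf) with hh
  have hfh : f - ∑ i ∈ Finset.range (c+1),
      PowerSeries.C (R := MvPowerSeries (Fin n) 𝕂) (E f i) * u ^ i = u ^ (c+1) * h :=
    Classical.choose_spec (Ideal.mem_span_singleton.mp hf)
  refine ⟨fun j => PowerSeries.coeff (R := MvPowerSeries (Fin n) 𝕂) j (u ^ (c+1) * h),
    ?_, ?_⟩
  · intro j hj
    show PowerSeries.coeff (R := MvPowerSeries (Fin n) 𝕂) j (u ^ (c+1) * h) ∈ _
    rw [PowerSeries.coeff_mul]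
    apply Ideal.sum_mem
    rintro ⟨k, l⟩ hkl
    rw [Finset.HasAntidiagonal.mem_antidiagonal] at hkl
    have hk : k ≤ j := by omega
    have hcp : PowerSeries.coeff (R := MvPowerSeries (Fin n) 𝕂) k (u ^ (c+1)) ∈
        L 𝕂 n ((c + 1 - j) * d) := by
      rw [hu, coeff_u_pow]
      split_ifs with hkc
      · apply L_anti (Nat.mul_le_mul_right d (show c + 1 - j ≤ c + 1 - k by omega))
        exact Ideal.mul_mem_right _ _ (pow_mem_L (neg_mem (coe_q_mem_L q d hqd)))
      · exact Ideal.zero_mem _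
    exact Ideal.mul_mem_right _ _ hcp
  · intro j hj
    have : f = ∑ i ∈ Finset.range (c+1),
        PowerSeries.C (R := MvPowerSeries (Fin n) 𝕂) (E f i) * u ^ i + u ^ (c+1) * h := by
      rw [← hfh]; ring
    have h2 := congrArg (PowerSeries.coeff (R := MvPowerSeries (Fin n) 𝕂) j) this
    rw [map_add, map_sum] at h2
    rw [h2]
    congr 1
    apply Finset.sum_congr rfl
    intro i _
    rw [PowerSeries.coeff_C_mul, hu, coeff_u_pow, A]

lemma mem_L_zero (f : MvPowerSeries (Fin n) 𝕂) : f ∈ L 𝕂 n 0 :=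
  mem_L.mpr fun _ he => absurd he (by omega)

lemma claimA (hqd : q.IsHomogeneous d)
    (hu : u = PowerSeries.X -
      PowerSeries.C (R := MvPowerSeries (Fin n) 𝕂) (↑q : MvPowerSeries (Fin n) 𝕂))
    (f : PowerSeries (MvPowerSeries (Fin n) 𝕂))
    (hfspan : f - ∑ i ∈ Finset.range (c+1),
      PowerSeries.C (R := MvPowerSeries (Fin n) 𝕂) (E f i) * u ^ i ∈ Ideal.span {u ^ (c+1)})
    (hK : ∀ j, j < c → PowerSeries.coeff (R := MvPowerSeries (Fin n) 𝕂) j f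
      ∈ L 𝕂 n ((c - j) * d + 1)) :
    ∀ j, j ≤ c → E f j ∈ L 𝕂 n ((c - j) * d) := by
  classical
  obtain ⟨rem, hrem, heq⟩ := master q d u c E hqd hu f hfspan
  suffices H : ∀ k j, j ≤ c → c - j = k → E f j ∈ L 𝕂 n ((c - j) * d) from
    fun j hj => H (c - j) j hj rfl
  intro k
  induction k using Nat.strong_induction_on with
  | _ k ih =>
    intro j hj hk
    have hjr : j ∈ Finset.range (c+1) := Finset.mem_range.mpr (by omega)
    have hAjj : A (↑q : MvPowerSeries (Fin n) 𝕂) j j = 1 := by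
      rw [A, if_pos le_rfl]; simp
    have hsum : ∑ i ∈ Finset.range (c+1), E f i * A (↑q : MvPowerSeries (Fin n) 𝕂) i j
        = E f j * A (↑q : MvPowerSeries (Fin n) 𝕂) j j
          + ∑ i ∈ (Finset.range (c+1)).erase j, E f i * A (↑q : MvPowerSeries (Fin n) 𝕂) i j :=
      (Finset.add_sum_erase _ _ hjr).symm
    have hEj : E f j = PowerSeries.coeff (R := MvPowerSeries (Fin n) 𝕂) j f - rem j
        - ∑ i ∈ (Finset.range (c+1)).erase j, E f i * A (↑q : MvPowerSeries (Fin n) 𝕂) i j := by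
      have h0 := heq j hj
      rw [hsum, hAjj, mul_one] at h0
      linear_combination -h0
    rw [hEj]
    refine sub_mem (sub_mem ?_ ?_) ?_
    · rcases eq_or_lt_of_le hj with hcase | hcase
      · subst hcase
        simp [Nat.sub_self, mem_L_zero]
      · exact L_anti (by omega) (hK j hcase)
    · exact L_anti (Nat.mul_le_mul_right d (by omega)) (hrem j hj)
    · apply Ideal.sum_mem
      intro i hi
      rw [Finset.mem_erase, Finset.mem_range] at hi
      by_cases hij : j ≤ i
      · have hji : j < i := lt_of_le_of_ne hij (Ne.symm hi.1)
        have hEi : E f i ∈ L 𝕂 n ((c - i) * d) :=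
          ih (c - i) (by omega) i (by omega) rfl
        have := mul_mem_L hEi (A_mem_L q d hqd (i := i) (j := j))
        have harith : (c - i) * d + (i - j) * d = (c - j) * d := by
          rw [← Nat.add_mul]
          congr 1
          omega
        rwa [harith] at this
      · rw [A, if_neg hij, mul_zero]
        exact zero_mem _

lemma claimC (hqd : q.IsHomogeneous d) (hd : 1 ≤ d)
    (hu : u = PowerSeries.X -
      PowerSeries.C (R := MvPowerSeries (Fin n) 𝕂) (↑q : MvPowerSeries (Fin n) 𝕂))
    (f : PowerSeries (MvPowerSeries (Fin n) 𝕂))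
    (hfspan : f - ∑ i ∈ Finset.range (c+1),
      PowerSeries.C (R := MvPowerSeries (Fin n) 𝕂) (E f i) * u ^ i ∈ Ideal.span {u ^ (c+1)})
    (hK : ∀ j, j < c → PowerSeries.coeff (R := MvPowerSeries (Fin n) 𝕂) j f
      ∈ L 𝕂 n ((c - j) * d + 1)) :
    ∀ j, j ≤ c → E f j - (c.choose j : MvPowerSeries (Fin n) 𝕂)
        * (PowerSeries.coeff (R := MvPowerSeries (Fin n) 𝕂) c f
          * (↑q : MvPowerSeries (Fin n) 𝕂) ^ (c - j))
      ∈ L 𝕂 n ((c - j) * d + 1) := by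
  classical
  obtain ⟨rem, hrem, heq⟩ := master q d u c E hqd hu f hfspan
  set qq : MvPowerSeries (Fin n) 𝕂 := (↑q : MvPowerSeries (Fin n) 𝕂) with hqq
  set fc : MvPowerSeries (Fin n) 𝕂 := PowerSeries.coeff (R := MvPowerSeries (Fin n) 𝕂) c f with hfc
  suffices H : ∀ k j, j ≤ c → c - j = k →
      E f j - (c.choose j : MvPowerSeries (Fin n) 𝕂) * (fc * qq ^ (c - j))
        ∈ L 𝕂 n ((c - j) * d + 1) from fun j hj => H (c - j) j hj rfl
  intro k
  induction k using Nat.strong_induction_on with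
  | _ k ih =>
    intro j hj hk
    have hjr : j ∈ Finset.range (c+1) := Finset.mem_range.mpr (by omega)
    have hAjj : A qq j j = 1 := by
      rw [A, if_pos le_rfl]; simp
    have hsum : ∑ i ∈ Finset.range (c+1), E f i * A qq i j
        = E f j * A qq j j
          + ∑ i ∈ (Finset.range (c+1)).erase j, E f i * A qq i j :=
      (Finset.add_sum_erase _ _ hjr).symm
    have hEj : E f j = PowerSeries.coeff (R := MvPowerSeries (Fin n) 𝕂) j f - rem j
        - ∑ i ∈ (Finset.range (c+1)).erase j, E f i * A qq i j := by
      have h0 := heq j hj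
      rw [hsum, hAjj, mul_one] at h0
      linear_combination -h0
    rcases eq_or_lt_of_le hj with hcase | hjc
    · -- base case j = c
      subst hcase
      have hzero : ∑ i ∈ (Finset.range (j+1)).erase j, E f i * A qq i j = 0 := by
        apply Finset.sum_eq_zero
        intro i hi
        rw [Finset.mem_erase, Finset.mem_range] at hi
        rw [A, if_neg (by omega), mul_zero]
      have hexpr : E f j - (j.choose j : MvPowerSeries (Fin n) 𝕂) * (fc * qq ^ (j - j))
          = -rem j := by
        rw [hEj, hzero, Nat.choose_self, Nat.sub_self, pow_zero]
        push_cast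
        rw [hfc]
        ring
      rw [hexpr]
      apply neg_mem
      apply L_anti ?_ (hrem j le_rfl)
      have : (j + 1 - j) * d = d := by
        rw [show j + 1 - j = 1 by omega, one_mul]
      rw [this, Nat.sub_self]
      omega
    · -- inductive case j < c
      have hS : ∑ i ∈ (Finset.range (c+1)).erase j,
          (c.choose i : MvPowerSeries (Fin n) 𝕂) * (fc * qq ^ (c - i)) * A qq i j
          = -((c.choose j : MvPowerSeries (Fin n) 𝕂) * (fc * qq ^ (c - j))) := by
        have hsub : Finset.Ioc j c ⊆ (Finset.range (c+1)).erase j := by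
          intro i hi
          rw [Finset.mem_Ioc] at hi
          rw [Finset.mem_erase, Finset.mem_range]
          omega
        rw [← Finset.sum_subset hsub (by
          intro i hi hni
          rw [Finset.mem_erase, Finset.mem_range] at hi
          rw [Finset.mem_Ioc] at hni
          rw [A, if_neg (by omega), mul_zero])]
        have hterm : ∀ i ∈ Finset.Ioc j c,
            (c.choose i : MvPowerSeries (Fin n) 𝕂) * (fc * qq ^ (c - i)) * A qq i j
            = (((-1:ℤ)^(i-j) * (c.choose i) * (i.choose j) : ℤ) : MvPowerSeries (Fin n) 𝕂)
              * (fc * qq ^ (c - j)) := by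
          intro i hi
          rw [Finset.mem_Ioc] at hi
          have hq2 : qq ^ (c - i) * qq ^ (i - j) = qq ^ (c - j) := by
            rw [← pow_add]
            congr 1
            omega
          rw [A, if_pos hi.1.le, neg_pow]
          push_cast
          linear_combination ((-1 : MvPowerSeries (Fin n) 𝕂)^(i-j) * (c.choose i :
            MvPowerSeries (Fin n) 𝕂) * (i.choose j : MvPowerSeries (Fin n) 𝕂) * fc) * hq2
        rw [Finset.sum_congr rfl hterm, ← Finset.sum_mul, ← Int.cast_sum,
          alt_sum_choose hjc]
        push_cast
        ring
      have hsplit : ∑ i ∈ (Finset.range (c+1)).erase j, E f i * A qq i j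
          = (∑ i ∈ (Finset.range (c+1)).erase j,
              (E f i - (c.choose i : MvPowerSeries (Fin n) 𝕂) * (fc * qq ^ (c - i))) * A qq i j)
            + ∑ i ∈ (Finset.range (c+1)).erase j,
              (c.choose i : MvPowerSeries (Fin n) 𝕂) * (fc * qq ^ (c - i)) * A qq i j := by
        rw [← Finset.sum_add_distrib]
        apply Finset.sum_congr rfl
        intro i _
        ring
      have hkey : E f j - (c.choose j : MvPowerSeries (Fin n) 𝕂) * (fc * qq ^ (c - j))
          = PowerSeries.coeff (R := MvPowerSeries (Fin n) 𝕂) j f - rem j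
            - ∑ i ∈ (Finset.range (c+1)).erase j,
              (E f i - (c.choose i : MvPowerSeries (Fin n) 𝕂) * (fc * qq ^ (c - i)))
                * A qq i j := by
        rw [hEj, hsplit, hS]
        ring
      rw [hkey]
      refine sub_mem (sub_mem ?_ ?_) ?_
      · exact hK j hjc
      · apply L_anti ?_ (hrem j hj)
        have : (c + 1 - j) * d = (c - j) * d + d := by
          rw [show c + 1 - j = (c - j) + 1 by omega, Nat.add_mul, one_mul]
        omega
      · apply Ideal.sum_mem
        intro i hi
        rw [Finset.mem_erase, Finset.mem_range] at hi
        by_cases hij : j ≤ i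
        · have hji : j < i := lt_of_le_of_ne hij (Ne.symm hi.1)
          have hDi := ih (c - i) (by omega) i (by omega) rfl
          have := mul_mem_L hDi (A_mem_L q d hqd (i := i) (j := j))
          have harith : (c - i) * d + 1 + (i - j) * d = (c - j) * d + 1 := by
            have h1 : (c - i) * d + (i - j) * d = (c - j) * d := by
              rw [← Nat.add_mul]
              congr 1
              omega
            omega
          rwa [harith] at this
        · rw [A, if_neg hij, mul_zero]
          exact zero_mem _

end Main
-- now the new material
lemma L_le_pow_maximalIdeal (k : ℕ) :
    L 𝕂 n k ≤ (IsLocalRing.maximalIdeal (MvPowerSeries (Fin n) 𝕂)) ^ k := by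
  induction k with
  | zero => simp
  | succ k ih =>
      calc L 𝕂 n (k+1) ≤ IsLocalRing.maximalIdeal (MvPowerSeries (Fin n) 𝕂) * L 𝕂 n k :=
            L_succ_le k
      _ ≤ IsLocalRing.maximalIdeal (MvPowerSeries (Fin n) 𝕂)
            * (IsLocalRing.maximalIdeal (MvPowerSeries (Fin n) 𝕂)) ^ k :=
            Ideal.mul_mono_right ih
      _ = (IsLocalRing.maximalIdeal (MvPowerSeries (Fin n) 𝕂)) ^ (k + 1) := by
            rw [pow_succ, mul_comm]

lemma le_ideal_sum {ι : Type*} {A : Type*} [CommRing A] {s : Finset ι} {N : ι → Ideal A}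
    {j : ι} (hj : j ∈ s) : N j ≤ ∑ i ∈ s, N i := by
  classical
  rw [← Finset.add_sum_erase s N hj, Ideal.add_eq_sup]
  exact le_sup_left

lemma ideal_sum_le {ι : Type*} {A : Type*} [CommRing A] {s : Finset ι} {N : ι → Ideal A}
    {M : Ideal A} (h : ∀ i ∈ s, N i ≤ M) : ∑ i ∈ s, N i ≤ M := by
  classical
  induction s using Finset.induction_on with
  | empty => simp
  | insert _ _ hx ih =>
      rw [Finset.sum_insert hx, Ideal.add_eq_sup]
      exact sup_le (h _ (Finset.mem_insert_self _ _))
        (ih fun i hi => h i (Finset.mem_insert_of_mem hi))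

lemma idealOrdAux {A : Type*} [CommRing A] (I K : Ideal A) (v : ℕ) (h1 : K ≤ I ^ v)
    (h2 : ¬ K ≤ I ^ (v + 1)) :
    sSup ((fun k : ℕ => (k : ℕ∞)) '' {k : ℕ | K ≤ I ^ k}) = (v : ℕ∞) := by
  apply le_antisymm
  · apply sSup_le
    rintro x ⟨k, hk, rfl⟩
    simp only [Set.mem_setOf_eq] at hk
    by_contra hgt
    push_neg at hgt
    rw [Nat.cast_lt] at hgt
    exact h2 (le_trans hk (Ideal.pow_le_pow_right (by omega)))
  · exact le_sSup ⟨v, h1, rfl⟩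

lemma exact_ordE (q : MvPolynomial (Fin n) 𝕂) (d : ℕ)
    (u : PowerSeries (MvPowerSeries (Fin n) 𝕂))
    (c : ℕ) (E : PowerSeries (MvPowerSeries (Fin n) 𝕂) → ℕ → MvPowerSeries (Fin n) 𝕂)
    (hq0 : q ≠ 0) (hqd : q.IsHomogeneous d) (hd : 1 ≤ d) (hc1 : 1 ≤ c)
    (hu : u = PowerSeries.X -
      PowerSeries.C (R := MvPowerSeries (Fin n) 𝕂) (↑q : MvPowerSeries (Fin n) 𝕂))
    (f : PowerSeries (MvPowerSeries (Fin n) 𝕂))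
    (hfspan : f - ∑ i ∈ Finset.range (c+1),
      PowerSeries.C (R := MvPowerSeries (Fin n) 𝕂) (E f i) * u ^ i ∈ Ideal.span {u ^ (c+1)})
    (hK : ∀ j, j < c → PowerSeries.coeff (R := MvPowerSeries (Fin n) 𝕂) j f
      ∈ L 𝕂 n ((c - j) * d + 1))
    (hfc : MvPowerSeries.constantCoeff (σ := Fin n) (R := 𝕂)
      (PowerSeries.coeff (R := MvPowerSeries (Fin n) 𝕂) c f) ≠ 0) :
    OrdE (c * d) (E f 0) := by
  classical
  set qq : MvPowerSeries (Fin n) 𝕂 := (↑q : MvPowerSeries (Fin n) 𝕂) with hqq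
  set fc : MvPowerSeries (Fin n) 𝕂 := PowerSeries.coeff (R := MvPowerSeries (Fin n) 𝕂) c f with hfcdef
  constructor
  · have := claimA q d u c E hqd hu f hfspan hK 0 (by omega)
    simpa using this
  · -- find a nonzero coefficient of degree c*d
    have hqc0 : q ^ c ≠ 0 := pow_ne_zero _ hq0
    obtain ⟨e, he⟩ := MvPolynomial.ne_zero_iff.mp hqc0
    have hdeg : e.degree = c * d := by
      by_contra hne
      exact he ((hqd.pow c).coeff_eq_zero fun h => hne (h.trans (Nat.mul_comm d c)))
    refine ⟨e, hdeg, ?_⟩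
    have hΔ := claimC q d u c E hqd hd hu f hfspan hK 0 (by omega)
    rw [Nat.choose_zero_right, Nat.sub_zero, Nat.cast_one, one_mul] at hΔ
    have hΔ0 : MvPowerSeries.coeff (R := 𝕂) e (E f 0 - fc * qq ^ c) = 0 :=
      mem_L.mp hΔ e (by omega)
    rw [map_sub, sub_eq_zero] at hΔ0
    rw [hΔ0]
    -- coefficient of fc * qq^c at e
    have hqqc : (qq : MvPowerSeries (Fin n) 𝕂) ^ c = ((q ^ c : MvPolynomial (Fin n) 𝕂) :
        MvPowerSeries (Fin n) 𝕂) := by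
      rw [hqq]
      push_cast
      rfl
    rw [MvPowerSeries.coeff_mul, Finset.sum_eq_single ((0 : Fin n →₀ ℕ), e)]
    · rw [hqqc, MvPolynomial.coeff_coe, MvPowerSeries.coeff_zero_eq_constantCoeff]
      exact mul_ne_zero hfc he
    · rintro ⟨a, b⟩ hab hne
      rw [Finset.HasAntidiagonal.mem_antidiagonal] at hab
      by_cases hb : b.degree = c * d
      · have hab' : a.degree + b.degree = e.degree := by rw [← degree_add, hab]
        have ha0 : a = 0 := by
          rw [← Finsupp.degree_eq_zero_iff]
          omega
        exfalso
        apply hne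
        have : b = e := by rw [← hab, ha0, zero_add]
        rw [ha0, this]
      · rw [hqqc, MvPolynomial.coeff_coe,
          (hqd.pow c).coeff_eq_zero (fun h => hb (h.trans (Nat.mul_comm d c))), mul_zero]
    · intro hmem
      exfalso
      apply hmem
      rw [Finset.HasAntidiagonal.mem_antidiagonal]
      exact zero_add e


end CO

/-- Coordinate change `u = z − q`, `q` a nonzero homogeneous polynomial of positive degree:
if `c!·deg q < o` and some `f ∈ J` is `z`-regular of order `c`, then `o₁ = c!·deg q`, and in
particular `o₁ < o`. -/
theorem order_coeff_ideal_after_translation_lt {𝕂 : Type*} [Field 𝕂] (p : ℕ)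
    (hp : p.Prime) [CharP 𝕂 p] {n : ℕ}
    (q : MvPolynomial (Fin n) 𝕂) (d : ℕ) (hq0 : q ≠ 0) (hqd : q.IsHomogeneous d) (hd : 1 ≤ d)
    (u : PowerSeries (MvPowerSeries (Fin n) 𝕂))
    (hu : u = PowerSeries.X -
      PowerSeries.C (R := MvPowerSeries (Fin n) 𝕂) (↑q : MvPowerSeries (Fin n) 𝕂))
    (J : Ideal (PowerSeries (MvPowerSeries (Fin n) 𝕂))) (c : ℕ) (hc1 : 1 ≤ c)
    (hc : idealOrd (IsLocalRing.maximalIdeal (PowerSeries (MvPowerSeries (Fin n) 𝕂))) J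
      = (c : ℕ∞))
    (E : PowerSeries (MvPowerSeries (Fin n) 𝕂) → ℕ → MvPowerSeries (Fin n) 𝕂)
    (hE : ∀ f : PowerSeries (MvPowerSeries (Fin n) 𝕂), ∀ N : ℕ,
      f - ∑ i ∈ Finset.range N, PowerSeries.C (R := MvPowerSeries (Fin n) 𝕂) (E f i) * u ^ i
        ∈ Ideal.span {u ^ N})
    (hdeg : ((c.factorial * d : ℕ) : ℕ∞)
      < idealOrd (IsLocalRing.maximalIdeal (MvPowerSeries (Fin n) 𝕂)) (coeffIdeal J c))
    (hreg : ∃ f ∈ J, zRegular f c) :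
    idealOrd (IsLocalRing.maximalIdeal (MvPowerSeries (Fin n) 𝕂)) (coeffIdealE E J c)
        = ((c.factorial * d : ℕ) : ℕ∞) ∧
      idealOrd (IsLocalRing.maximalIdeal (MvPowerSeries (Fin n) 𝕂)) (coeffIdealE E J c)
        < idealOrd (IsLocalRing.maximalIdeal (MvPowerSeries (Fin n) 𝕂)) (coeffIdeal J c) := by
  classical
  obtain ⟨f₀, hf₀J, hreg0⟩ := hreg
  have hKle : coeffIdeal J c ≤
      (IsLocalRing.maximalIdeal (MvPowerSeries (Fin n) 𝕂)) ^ (c.factorial * d + 1) := by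
    obtain ⟨x, hx, hlt⟩ := lt_sSup_iff.mp hdeg
    obtain ⟨k, hk, rfl⟩ := hx
    rw [Nat.cast_lt] at hlt
    simp only [Set.mem_setOf_eq] at hk
    exact le_trans hk (Ideal.pow_le_pow_right (by omega))
  have hK : ∀ f ∈ J, ∀ j, j < c → PowerSeries.coeff (R := MvPowerSeries (Fin n) 𝕂) j f
      ∈ CO.L 𝕂 n ((c - j) * d + 1) := by
    intro f hf j hj
    have hdvd : (c - j) ∣ c.factorial := Nat.dvd_factorial (by omega) (by omega)
    have hm : 0 < c.factorial / (c - j) :=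
      Nat.div_pos (Nat.le_of_dvd (Nat.factorial_pos c) hdvd) (by omega)
    have hmem : (PowerSeries.coeff (R := MvPowerSeries (Fin n) 𝕂) j f) ^ (c.factorial / (c - j))
        ∈ coeffIdeal J c := by
      unfold coeffIdeal
      have hx0 : PowerSeries.coeff (R := MvPowerSeries (Fin n) 𝕂) j f
          ∈ Ideal.span ((PowerSeries.coeff (R := MvPowerSeries (Fin n) 𝕂) j) '' J) :=
        Ideal.subset_span ⟨f, hf, rfl⟩
      exact CO.le_ideal_sum (N := fun i => (Ideal.span
        ((PowerSeries.coeff (R := MvPowerSeries (Fin n) 𝕂) i) '' J)) ^ (c.factorial / (c - i)))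
        (Finset.mem_range.mpr hj) (Ideal.pow_mem_pow hx0 _)
    have hmemL : (PowerSeries.coeff (R := MvPowerSeries (Fin n) 𝕂) j f) ^ (c.factorial / (c - j))
        ∈ CO.L 𝕂 n ((c.factorial / (c - j)) * ((c - j) * d) + 1) := by
      have harith : c.factorial / (c - j) * ((c - j) * d) = c.factorial * d := by
        rw [← mul_assoc, Nat.div_mul_cancel hdvd]
      rw [harith]
      exact CO.pow_maximalIdeal_le_L _ (hKle hmem)
    exact CO.mem_L_of_pow_mem hm hmemL
  have hK1le : coeffIdealE E J c ≤
      (IsLocalRing.maximalIdeal (MvPowerSeries (Fin n) 𝕂)) ^ (c.factorial * d) := by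
    unfold coeffIdealE
    apply CO.ideal_sum_le
    intro i hi
    rw [Finset.mem_range] at hi
    have hdvd : (c - i) ∣ c.factorial := Nat.dvd_factorial (by omega) (by omega)
    have hspan : Ideal.span ((fun f => E f i) '' J) ≤ CO.L 𝕂 n ((c - i) * d) := by
      rw [Ideal.span_le]
      rintro x ⟨f, hfJ, rfl⟩
      exact CO.claimA q d u c E hqd hu f (hE f (c+1)) (hK f hfJ) i (by omega)
    have h1 : Ideal.span ((fun f => E f i) '' J) ≤
        (IsLocalRing.maximalIdeal (MvPowerSeries (Fin n) 𝕂)) ^ ((c - i) * d) :=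
      le_trans hspan (CO.L_le_pow_maximalIdeal _)
    calc (Ideal.span ((fun f => E f i) '' J)) ^ (c.factorial / (c - i))
        ≤ ((IsLocalRing.maximalIdeal (MvPowerSeries (Fin n) 𝕂)) ^ ((c - i) * d))
            ^ (c.factorial / (c - i)) := Ideal.pow_right_mono h1 _
      _ = (IsLocalRing.maximalIdeal (MvPowerSeries (Fin n) 𝕂)) ^ (c.factorial * d) := by
          rw [← pow_mul]
          congr 1
          rw [mul_comm ((c - i) * d), ← mul_assoc, Nat.div_mul_cancel hdvd]
  have hord : CO.OrdE (c * d) (E f₀ 0) :=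
    CO.exact_ordE q d u c E hq0 hqd hd hc1 hu f₀ (hE f₀ (c+1)) (hK f₀ hf₀J) hreg0.2
  have hnotle : ¬ coeffIdealE E J c ≤
      (IsLocalRing.maximalIdeal (MvPowerSeries (Fin n) 𝕂)) ^ (c.factorial * d + 1) := by
    intro hle
    have hx : (E f₀ 0) ^ (c.factorial / (c - 0)) ∈ coeffIdealE E J c := by
      unfold coeffIdealE
      have hx0 : E f₀ 0 ∈ Ideal.span ((fun f => E f 0) '' J) :=
        Ideal.subset_span ⟨f₀, hf₀J, rfl⟩
      exact CO.le_ideal_sum (N := fun i => (Ideal.span ((fun f => E f i) '' J))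
        ^ (c.factorial / (c - i))) (Finset.mem_range.mpr (by omega : 0 < c))
        (Ideal.pow_mem_pow hx0 _)
    have hxL := CO.pow_maximalIdeal_le_L _ (hle hx)
    have hordpow := hord.pow (m := c.factorial / (c - 0))
    have harith : c.factorial / (c - 0) * (c * d) = c.factorial * d := by
      rw [Nat.sub_zero, ← mul_assoc, Nat.div_mul_cancel (Nat.dvd_factorial hc1 le_rfl)]
    rw [harith] at hordpow
    exact CO.not_mem_L_of_ordE hordpow (by omega) hxL
  have hmain : idealOrd (IsLocalRing.maximalIdeal (MvPowerSeries (Fin n) 𝕂)) (coeffIdealE E J c)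
      = ((c.factorial * d : ℕ) : ℕ∞) :=
    CO.idealOrdAux _ _ _ hK1le hnotle
  exact ⟨hmain, by rw [hmain]; exact hdeg⟩

end
end

section
/- In the situation of the coordinate change u = z − q with q ∈ 𝕂[x₁,…,xₙ] a nonzero homogeneous polynomial of positive degree: for any index 1 ≤ i ≤ n, if c!·ord_{(x_i)} q ≥ ord_{(x_i)} K, then ord_{(x_i)} K₁ ≥ ord_{(x_i)} K. Here J ⊆ R = 𝕂[[z,x₁,…,xₙ]] is an ideal of order c with 1 ≤ c < ∞, K = coeff_{V(z)}(J), K₁ = coeff_{V(u)}(J), and ord_{(x_i)} denotes the order along the prime ideal (x_i) of Q = 𝕂[[x₁,…,xₙ]], i.e., ord_{(x_i)} A = sup{k : A ⊆ (x_i)^k}. -/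
set_option synthInstance.maxHeartbeats 400000
set_option maxHeartbeats 1000000

noncomputable section

namespace CoeffOrdAux

open MvPowerSeries

variable {𝕂 : Type*} [Field 𝕂] {n : ℕ}

local instance : IsDomain (MvPowerSeries (Fin n) 𝕂) := NoZeroDivisors.to_isDomain _

/-- "Set `x i := 0`" as a function on multivariate power series. -/
def xzero (i : Fin n) (f : MvPowerSeries (Fin n) 𝕂) : MvPowerSeries (Fin n) 𝕂 :=
  fun m => if m i = 0 then MvPowerSeries.coeff m f else 0

lemma coeff_xzero (i : Fin n) (f : MvPowerSeries (Fin n) 𝕂) (m : Fin n →₀ ℕ) :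
    MvPowerSeries.coeff m (xzero i f) = if m i = 0 then MvPowerSeries.coeff m f else 0 :=
  rfl

lemma xzero_mul (i : Fin n) (f g : MvPowerSeries (Fin n) 𝕂) :
    xzero i (f * g) = xzero i f * xzero i g := by
  ext m
  rw [coeff_xzero, MvPowerSeries.coeff_mul]
  by_cases hm : m i = 0
  · rw [if_pos hm, MvPowerSeries.coeff_mul]
    apply Finset.sum_congr rfl
    rintro ⟨a, b⟩ hab
    rw [Finset.HasAntidiagonal.mem_antidiagonal] at hab
    have ha : a i = 0 := by
      have := congrArg (fun m => m i) hab
      simp only [Finsupp.add_apply] at this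
      omega
    have hb : b i = 0 := by
      have := congrArg (fun m => m i) hab
      simp only [Finsupp.add_apply] at this
      omega
    rw [coeff_xzero, coeff_xzero, if_pos ha, if_pos hb]
  · rw [if_neg hm]
    symm
    rw [MvPowerSeries.coeff_mul]
    refine Finset.sum_eq_zero ?_
    rintro ⟨a, b⟩ hab
    rw [Finset.HasAntidiagonal.mem_antidiagonal] at hab
    have : a i ≠ 0 ∨ b i ≠ 0 := by
      have := congrArg (fun m => m i) hab
      simp only [Finsupp.add_apply] at this
      omega
    rcases this with h | h
    · rw [coeff_xzero, if_neg h, zero_mul]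
    · rw [coeff_xzero (f := g), if_neg h, mul_zero]

lemma xzero_eq_zero_iff (i : Fin n) (f : MvPowerSeries (Fin n) 𝕂) :
    xzero i f = 0 ↔ (X i : MvPowerSeries (Fin n) 𝕂) ∣ f := by
  rw [MvPowerSeries.X_dvd_iff]
  constructor
  · intro h m hm
    have := congrArg (fun g => MvPowerSeries.coeff m g) h
    simpa [coeff_xzero, hm] using this
  · intro h
    ext m
    rw [coeff_xzero]
    by_cases hm : m i = 0
    · simp [hm, h m hm]
    · simp [hm]

lemma prime_X (i : Fin n) : Prime (X i : MvPowerSeries (Fin n) 𝕂) := by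
  constructor
  · intro h0
    have h1 : MvPowerSeries.coeff (Finsupp.single i 1) (X i : MvPowerSeries (Fin n) 𝕂) = 1 := by
      rw [MvPowerSeries.coeff_X, if_pos rfl]
    rw [h0, map_zero] at h1
    exact one_ne_zero h1.symm
  constructor
  · intro hunit
    have h1 : (X i : MvPowerSeries (Fin n) 𝕂) ∣ 1 := hunit.dvd
    rw [MvPowerSeries.X_dvd_iff] at h1
    have := h1 0 (by simp)
    simp at this
  · intro a b hab
    rw [← xzero_eq_zero_iff] at hab ⊢
    rw [← xzero_eq_zero_iff (f := b)]
    rw [xzero_mul] at hab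
    exact mul_eq_zero.mp hab

lemma eq_zero_of_forall_dvd {i : Fin n} {g : MvPowerSeries (Fin n) 𝕂}
    (h : ∀ t : ℕ, (X i : MvPowerSeries (Fin n) 𝕂) ^ t ∣ g) : g = 0 := by
  ext m
  have := (MvPowerSeries.X_pow_dvd_iff.mp (h (m i + 1))) m (by omega)
  simpa using this

lemma X_pow_ne_zero (i : Fin n) (t : ℕ) : (X i : MvPowerSeries (Fin n) 𝕂) ^ t ≠ 0 :=
  pow_ne_zero _ (prime_X i).1

lemma root_lemma {i : Fin n} {g : MvPowerSeries (Fin n) 𝕂} {e k : ℕ} (he : 0 < e)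
    (hg : g ^ e ∈ Ideal.span {(X i : MvPowerSeries (Fin n) 𝕂)} ^ k) :
    g ∈ Ideal.span {(X i : MvPowerSeries (Fin n) 𝕂)} ^ (k ⌈/⌉ e) := by
  by_cases hg0 : g = 0
  · simp [hg0]
  rw [Ideal.span_singleton_pow, Ideal.mem_span_singleton] at hg ⊢
  classical
  have hex : ∃ t, ¬ (X i : MvPowerSeries (Fin n) 𝕂) ^ t ∣ g := by
    by_contra hc
    push_neg at hc
    exact hg0 (eq_zero_of_forall_dvd hc)
  set t0 := Nat.find hex with ht0def
  have ht0 : ¬ (X i : MvPowerSeries (Fin n) 𝕂) ^ t0 ∣ g := Nat.find_spec hex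
  have ht0pos : 0 < t0 := by
    rcases Nat.eq_zero_or_pos t0 with h | h
    · exfalso; apply ht0; rw [h, pow_zero]; exact one_dvd g
    · exact h
  obtain ⟨h, hgh⟩ : (X i : MvPowerSeries (Fin n) 𝕂) ^ (t0 - 1) ∣ g := by
    have := Nat.find_min hex (m := t0 - 1) (by omega)
    exact not_not.mp this
  have hXh : ¬ (X i : MvPowerSeries (Fin n) 𝕂) ∣ h := by
    rintro ⟨w, rfl⟩
    apply ht0
    have : t0 = (t0 - 1) + 1 := by omega
    rw [this, pow_succ]
    exact ⟨w, by rw [hgh]; ring⟩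
  have hkle : k ≤ e * (t0 - 1) := by
    by_contra hlt
    push_neg at hlt
    have h1 : (X i : MvPowerSeries (Fin n) 𝕂) ^ ((t0-1)*e + 1) ∣
        ((X i : MvPowerSeries (Fin n) 𝕂) ^ (t0-1) * h) ^ e := by
      rw [← hgh]
      refine dvd_trans (pow_dvd_pow _ ?_) hg
      have h2 : (t0-1)*e = e*(t0-1) := Nat.mul_comm _ _
      omega
    rw [mul_pow, ← pow_mul] at h1
    obtain ⟨w, hw⟩ := h1
    rw [pow_succ] at hw
    have hcanc : h ^ e = (X i : MvPowerSeries (Fin n) 𝕂) * w := by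
      apply mul_left_cancel₀ (X_pow_ne_zero i ((t0-1)*e))
      rw [hw]; ring
    have : (X i : MvPowerSeries (Fin n) 𝕂) ∣ h := (prime_X i).dvd_of_dvd_pow ⟨w, hcanc⟩
    exact hXh this
  have : k ⌈/⌉ e ≤ t0 - 1 := (ceilDiv_le_iff_le_mul he).mpr hkle
  rw [hgh]
  exact Dvd.dvd.mul_right (pow_dvd_pow _ this) h

/-- Arithmetic step for the weight function `t j = k ⌈/⌉ (c!/(c-j))`. -/
lemma tfun_step (k c b : ℕ) (hc1 : 1 ≤ c) (hkb : k ≤ c.factorial * b) (s : ℕ) :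
    k ⌈/⌉ (c.factorial / (c - s)) ≤ k ⌈/⌉ (c.factorial / (c - (s+1))) + b := by
  rcases le_or_gt c s with hs | hs
  · rw [Nat.sub_eq_zero_of_le hs, Nat.div_zero, ceilDiv_zero]
    exact Nat.zero_le _
  have hes : 0 < c.factorial / (c - s) :=
    Nat.div_pos (le_trans (Nat.sub_le c s) (Nat.self_le_factorial c)) (by omega)
  have hds : (c.factorial / (c - s)) * (c - s) = c.factorial :=
    Nat.div_mul_cancel (Nat.dvd_factorial (by omega) (by omega))
  rcases le_or_gt c (s+1) with h1 | h1
  · -- s = c - 1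
    have hcs : c - s = 1 := by omega
    rw [Nat.sub_eq_zero_of_le h1, Nat.div_zero, ceilDiv_zero, hcs, Nat.div_one]
    have : k ⌈/⌉ c.factorial ≤ b :=
      (ceilDiv_le_iff_le_mul c.factorial_pos).mpr hkb
    omega
  · have hes' : 0 < c.factorial / (c - (s+1)) :=
      Nat.div_pos (le_trans (Nat.sub_le c (s+1)) (Nat.self_le_factorial c)) (by omega)
    have hds' : (c.factorial / (c - (s+1))) * (c - (s+1)) = c.factorial :=
      Nat.div_mul_cancel (Nat.dvd_factorial (by omega) (by omega))
    set e := c.factorial / (c - s) with he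
    set e' := c.factorial / (c - (s+1)) with he'
    set t1 := k ⌈/⌉ e' with ht1
    have hP2' : k ≤ e' * t1 := le_smul_ceilDiv hes'
    rw [ceilDiv_le_iff_le_mul hes]
    refine Nat.le_of_mul_le_mul_right ?_ (show 0 < c - s by omega)
    have hβ : c - s = (c - (s+1)) + 1 := by omega
    calc k * (c - s) = k * (c - (s+1)) + k := by rw [hβ]; ring
      _ ≤ (e' * t1) * (c - (s+1)) + c.factorial * b :=
          Nat.add_le_add (Nat.mul_le_mul_right _ hP2') hkb
      _ = (e' * (c - (s+1))) * t1 + c.factorial * b := by ring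
      _ = c.factorial * t1 + c.factorial * b := by rw [hds']
      _ = e * (t1 + b) * (c - s) := by rw [← hds]; ring
  
/-- The key estimate: if all the `z`-coefficients of `f` satisfy the weighted bound `t`,
then so do all the `u`-expansion coefficients of `f`. -/
lemma main_aux (i : Fin n) (q : MvPowerSeries (Fin n) 𝕂)
    (u : PowerSeries (MvPowerSeries (Fin n) 𝕂))
    (hu : u = PowerSeries.X - PowerSeries.C (R := MvPowerSeries (Fin n) 𝕂) q)
    (E : ℕ → MvPowerSeries (Fin n) 𝕂) (f : PowerSeries (MvPowerSeries (Fin n) 𝕂))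
    (hE : ∀ N : ℕ,
      f - ∑ j ∈ Finset.range N, PowerSeries.C (R := MvPowerSeries (Fin n) 𝕂) (E j) * u ^ j
        ∈ Ideal.span {u ^ N})
    (t : ℕ → ℕ) (b c : ℕ)
    (hqb : q ∈ Ideal.span {(X i : MvPowerSeries (Fin n) 𝕂)} ^ b)
    (htc : ∀ j, c ≤ j → t j = 0)
    (ht3 : ∀ s, t s ≤ t (s+1) + b)
    (hfj : ∀ j, PowerSeries.coeff (R := MvPowerSeries (Fin n) 𝕂) j f
        ∈ Ideal.span {(X i : MvPowerSeries (Fin n) 𝕂)} ^ t j)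
    (s : ℕ) : E s ∈ Ideal.span {(X i : MvPowerSeries (Fin n) 𝕂)} ^ t s := by
  set I : Ideal (MvPowerSeries (Fin n) 𝕂) := Ideal.span {(X i : MvPowerSeries (Fin n) 𝕂)}
    with hI
  have hu0 : u ≠ 0 := by
    intro h0
    have h1 : PowerSeries.coeff (R := MvPowerSeries (Fin n) 𝕂) 1 u = 0 := by rw [h0]; simp
    rw [hu] at h1
    simp [PowerSeries.coeff_X, PowerSeries.coeff_C] at h1
  choose h hh using fun N => Ideal.mem_span_singleton.mp (hE N)
  have hh0eq : h 0 = f := by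
    have := hh 0
    simpa using this.symm
  have hstep : ∀ s, h s = PowerSeries.C (R := MvPowerSeries (Fin n) 𝕂) (E s) + u * h (s+1) := by
    intro s
    have e1 := hh s
    have e2 := hh (s+1)
    rw [Finset.sum_range_succ] at e2
    have e4 : u ^ s * (h s - PowerSeries.C (R := MvPowerSeries (Fin n) 𝕂) (E s))
        = u ^ s * (u * h (s+1)) := by
      have e3 : (f - ∑ j ∈ Finset.range s,
          PowerSeries.C (R := MvPowerSeries (Fin n) 𝕂) (E j) * u ^ j)
          - PowerSeries.C (R := MvPowerSeries (Fin n) 𝕂) (E s) * u ^ s = u ^ (s+1) * h (s+1) := by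
        rw [← e2]; ring
      rw [e1] at e3
      linear_combination e3
    have e5 := mul_left_cancel₀ (pow_ne_zero s hu0) e4
    linear_combination e5
  have hco : ∀ s j, PowerSeries.coeff (R := MvPowerSeries (Fin n) 𝕂) (j+1) (h s)
      = PowerSeries.coeff (R := MvPowerSeries (Fin n) 𝕂) j (h (s+1))
        - q * PowerSeries.coeff (R := MvPowerSeries (Fin n) 𝕂) (j+1) (h (s+1)) := by
    intro s j
    rw [hstep s, hu]
    simp [sub_mul, PowerSeries.coeff_succ_X_mul, PowerSeries.coeff_C]
  have hco0 : ∀ s, PowerSeries.coeff (R := MvPowerSeries (Fin n) 𝕂) 0 (h s)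
      = E s - q * PowerSeries.coeff (R := MvPowerSeries (Fin n) 𝕂) 0 (h (s+1)) := by
    intro s
    rw [hstep s, hu]
    simp [sub_mul, PowerSeries.coeff_zero_X_mul, PowerSeries.coeff_C]
    ring
  have htriv : ∀ m : ℕ, t m = 0 → ∀ g : MvPowerSeries (Fin n) 𝕂, g ∈ I ^ t m := by
    intro m hm g
    rw [hm, pow_zero, Ideal.one_eq_top]
    exact Submodule.mem_top
  have hB : ∀ s j, PowerSeries.coeff (R := MvPowerSeries (Fin n) 𝕂) j (h s) ∈ I ^ t (s + j) := by
    intro s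
    induction s with
    | zero =>
      intro j
      rw [hh0eq]
      simpa using hfj j
    | succ s ih =>
      have key : ∀ m j, c - (s + 1 + j) ≤ m →
          PowerSeries.coeff (R := MvPowerSeries (Fin n) 𝕂) j (h (s+1)) ∈ I ^ t (s + 1 + j) := by
        intro m
        induction m with
        | zero =>
          intro j hj
          exact htriv _ (htc _ (by omega)) _
        | succ m ihm =>
          intro j hj
          rcases le_or_gt c (s+1+j) with hcj | hcj
          · exact htriv _ (htc _ hcj) _
          · have h1 := ihm (j+1) (by omega)
            have h2 := ih (j+1)
            have e1 : s + (j+1) = s + 1 + j := by omega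
            rw [e1] at h2
            have h3 : q * PowerSeries.coeff (R := MvPowerSeries (Fin n) 𝕂) (j+1) (h (s+1))
                ∈ I ^ (b + t (s + 1 + (j+1))) := by
              rw [pow_add]
              exact Ideal.mul_mem_mul hqb h1
            have h4 : I ^ (b + t (s + 1 + (j+1))) ≤ I ^ t (s + 1 + j) := by
              apply Ideal.pow_le_pow_right
              have h5 := ht3 (s + 1 + j)
              have e2 : s + 1 + j + 1 = s + 1 + (j + 1) := by omega
              rw [e2] at h5
              omega
            have heq : PowerSeries.coeff (R := MvPowerSeries (Fin n) 𝕂) j (h (s+1))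
                = PowerSeries.coeff (R := MvPowerSeries (Fin n) 𝕂) (j+1) (h s)
                  + q * PowerSeries.coeff (R := MvPowerSeries (Fin n) 𝕂) (j+1) (h (s+1)) := by
              linear_combination -(hco s j)
            rw [heq]
            exact Ideal.add_mem _ h2 (h4 h3)
      intro j
      exact key (c - (s + 1 + j)) j le_rfl
  have hw0 := hB (s+1) 0
  have hs0 := hB s 0
  have heq : E s = PowerSeries.coeff (R := MvPowerSeries (Fin n) 𝕂) 0 (h s)
      + q * PowerSeries.coeff (R := MvPowerSeries (Fin n) 𝕂) 0 (h (s+1)) := by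
    linear_combination -(hco0 s)
  have h3 : q * PowerSeries.coeff (R := MvPowerSeries (Fin n) 𝕂) 0 (h (s+1))
      ∈ I ^ (b + t (s + 1)) := by
    rw [pow_add]
    exact Ideal.mul_mem_mul hqb hw0
  have h4 : I ^ (b + t (s + 1)) ≤ I ^ t s := by
    apply Ideal.pow_le_pow_right
    have := ht3 s
    omega
  rw [heq]
  exact Ideal.add_mem _ hs0 (h4 h3)

end CoeffOrdAux

/-- Coordinate change `u = z − q`, `q` a nonzero homogeneous polynomial of positive degree:
for any index `i`, if `c!·ord_{(x_i)} q ≥ ord_{(x_i)} K`, then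
`ord_{(x_i)} K₁ ≥ ord_{(x_i)} K`, where `K = coeff_{V(z)}(J)`, `K₁ = coeff_{V(u)}(J)` and
`ord_{(x_i)}` is the order along the prime ideal `(x_i)`. -/
theorem order_along_xi_after_translation {𝕂 : Type*} [Field 𝕂] (p : ℕ)
    (hp : p.Prime) [CharP 𝕂 p] {n : ℕ}
    (q : MvPolynomial (Fin n) 𝕂) (d : ℕ) (hq0 : q ≠ 0) (hqd : q.IsHomogeneous d) (hd : 1 ≤ d)
    (u : PowerSeries (MvPowerSeries (Fin n) 𝕂))
    (hu : u = PowerSeries.X -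
      PowerSeries.C (R := MvPowerSeries (Fin n) 𝕂) (↑q : MvPowerSeries (Fin n) 𝕂))
    (J : Ideal (PowerSeries (MvPowerSeries (Fin n) 𝕂))) (c : ℕ) (hc1 : 1 ≤ c)
    (hc : idealOrd (IsLocalRing.maximalIdeal (PowerSeries (MvPowerSeries (Fin n) 𝕂))) J
      = (c : ℕ∞))
    (E : PowerSeries (MvPowerSeries (Fin n) 𝕂) → ℕ → MvPowerSeries (Fin n) 𝕂)
    (hE : ∀ f : PowerSeries (MvPowerSeries (Fin n) 𝕂), ∀ N : ℕ,
      f - ∑ i ∈ Finset.range N, PowerSeries.C (R := MvPowerSeries (Fin n) 𝕂) (E f i) * u ^ i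
        ∈ Ideal.span {u ^ N})
    (i : Fin n)
    (hord : (c.factorial : ℕ∞) *
        elemOrd (Ideal.span {(MvPowerSeries.X i : MvPowerSeries (Fin n) 𝕂)})
          (↑q : MvPowerSeries (Fin n) 𝕂)
      ≥ idealOrd (Ideal.span {(MvPowerSeries.X i : MvPowerSeries (Fin n) 𝕂)})
          (coeffIdeal J c)) :
    idealOrd (Ideal.span {(MvPowerSeries.X i : MvPowerSeries (Fin n) 𝕂)}) (coeffIdealE E J c)
      ≥ idealOrd (Ideal.span {(MvPowerSeries.X i : MvPowerSeries (Fin n) 𝕂)})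
          (coeffIdeal J c) := by
  classical
  open CoeffOrdAux in
  set I : Ideal (MvPowerSeries (Fin n) 𝕂) :=
    Ideal.span {(MvPowerSeries.X i : MvPowerSeries (Fin n) 𝕂)} with hIdef
  have hsubset : {k : ℕ | coeffIdeal J c ≤ I ^ k} ⊆ {k : ℕ | coeffIdealE E J c ≤ I ^ k} := by
    intro k hk
    simp only [Set.mem_setOf_eq] at hk ⊢
    -- q is nonzero as a power series
    have hq0' : (↑q : MvPowerSeries (Fin n) 𝕂) ≠ 0 := by
      intro h0
      exact hq0 (by rwa [MvPolynomial.coe_eq_zero_iff] at h0)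
    -- the order b of q along (x i)
    have hbdd : BddAbove {m : ℕ | (↑q : MvPowerSeries (Fin n) 𝕂) ∈ I ^ m} := by
      by_contra hb
      apply hq0'
      apply CoeffOrdAux.eq_zero_of_forall_dvd (i := i)
      intro tt
      obtain ⟨m', hm', hmm⟩ := not_bddAbove_iff.mp hb tt
      have h2 : (↑q : MvPowerSeries (Fin n) 𝕂) ∈ I ^ tt :=
        Ideal.pow_le_pow_right hmm.le hm'
      rwa [hIdef, Ideal.span_singleton_pow, Ideal.mem_span_singleton] at h2
    have hne : {m : ℕ | (↑q : MvPowerSeries (Fin n) 𝕂) ∈ I ^ m}.Nonempty := ⟨0, by simp⟩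
    set b := sSup {m : ℕ | (↑q : MvPowerSeries (Fin n) 𝕂) ∈ I ^ m} with hbdef
    have hqb : (↑q : MvPowerSeries (Fin n) 𝕂) ∈ I ^ b := Nat.sSup_mem hne hbdd
    have helem : elemOrd I (↑q : MvPowerSeries (Fin n) 𝕂) = (b : ℕ∞) := by
      unfold elemOrd
      apply le_antisymm
      · apply sSup_le
        rintro x ⟨m, hm, rfl⟩
        exact Nat.cast_le.mpr (le_csSup hbdd hm)
      · exact le_sSup ⟨b, hqb, rfl⟩
    have hkK : (k : ℕ∞) ≤ idealOrd I (coeffIdeal J c) := le_sSup ⟨k, hk, rfl⟩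
    have hkb : k ≤ c.factorial * b := by
      have h2 := hkK.trans hord
      rw [helem] at h2
      exact_mod_cast h2
    -- the weight function
    set t : ℕ → ℕ := fun j => k ⌈/⌉ (c.factorial / (c - j)) with htdef
    have htc : ∀ j, c ≤ j → t j = 0 := by
      intro j hj
      simp only [htdef]
      rw [Nat.sub_eq_zero_of_le hj, Nat.div_zero, ceilDiv_zero]
    have ht3 : ∀ s, t s ≤ t (s+1) + b := fun s => CoeffOrdAux.tfun_step k c b hc1 hkb s
    have hepos : ∀ j, j < c → 0 < c.factorial / (c - j) := fun j hj =>
      Nat.div_pos (le_trans (Nat.sub_le c j) (Nat.self_le_factorial c)) (by omega)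
    -- main membership bound for the u-expansion coefficients
    have hmain : ∀ f ∈ J, ∀ s, E f s ∈ I ^ t s := by
      intro f hf
      refine CoeffOrdAux.main_aux i (↑q) u hu (E f) f (hE f) t b c hqb htc ht3 ?_
      intro j
      rcases lt_or_ge j c with hj | hj
      · have h1 : PowerSeries.coeff (R := MvPowerSeries (Fin n) 𝕂) j f
            ∈ Ideal.span ((PowerSeries.coeff (R := MvPowerSeries (Fin n) 𝕂) j) '' J) :=
          Ideal.subset_span ⟨f, hf, rfl⟩
        have h2 : (PowerSeries.coeff (R := MvPowerSeries (Fin n) 𝕂) j f) ^ (c.factorial / (c - j))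
            ∈ (Ideal.span ((PowerSeries.coeff (R := MvPowerSeries (Fin n) 𝕂) j) '' J))
              ^ (c.factorial / (c - j)) :=
          Ideal.pow_mem_pow h1 _
        have h3 : (Ideal.span ((PowerSeries.coeff (R := MvPowerSeries (Fin n) 𝕂) j) '' J))
            ^ (c.factorial / (c - j)) ≤ coeffIdeal J c := by
          have hKdef : coeffIdeal J c = ∑ i2 ∈ Finset.range c,
              (Ideal.span ((PowerSeries.coeff (R := MvPowerSeries (Fin n) 𝕂) i2) '' J))
                ^ (c.factorial / (c - i2)) := rfl
          rw [hKdef]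
          exact Finset.single_le_sum
            (f := fun i2 => (Ideal.span ((PowerSeries.coeff (R := MvPowerSeries (Fin n) 𝕂) i2) '' J))
              ^ (c.factorial / (c - i2)))
            (fun _ _ => bot_le) (Finset.mem_range.mpr hj)
        have h4 : (PowerSeries.coeff (R := MvPowerSeries (Fin n) 𝕂) j f) ^ (c.factorial / (c - j))
            ∈ I ^ k := hk (h3 h2)
        exact CoeffOrdAux.root_lemma (hepos j hj) h4
      · rw [htc j hj, pow_zero, Ideal.one_eq_top]
        exact Submodule.mem_top
    -- conclude
    have hK1def : coeffIdealE E J c = ∑ s ∈ Finset.range c,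
        (Ideal.span ((fun f => E f s) '' J)) ^ (c.factorial / (c - s)) := rfl
    rw [hK1def]
    refine Finset.sum_induction _ (fun A => A ≤ I ^ k) (fun a b' ha hb' => ?_) ?_ ?_
    · rw [Submodule.add_eq_sup]
      exact sup_le ha hb'
    · rw [Ideal.zero_eq_bot]
      exact bot_le
    · intro s hs
      rw [Finset.mem_range] at hs
      have hspan : Ideal.span ((fun f => E f s) '' J) ≤ I ^ t s := by
        rw [Ideal.span_le]
        rintro _ ⟨f, hf, rfl⟩
        exact hmain f hf s
      have hkts : k ≤ t s * (c.factorial / (c - s)) := by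
        have h5 : k ≤ (c.factorial / (c - s)) * (k ⌈/⌉ (c.factorial / (c - s))) := by
          have := le_smul_ceilDiv (b := k) (hepos s hs)
          simpa [smul_eq_mul] using this
        calc k ≤ (c.factorial / (c - s)) * (k ⌈/⌉ (c.factorial / (c - s))) := h5
          _ = t s * (c.factorial / (c - s)) := by rw [htdef]; ring
      calc (Ideal.span ((fun f => E f s) '' J)) ^ (c.factorial / (c - s))
          ≤ (I ^ t s) ^ (c.factorial / (c - s)) := Ideal.pow_right_mono hspan _
        _ = I ^ (t s * (c.factorial / (c - s))) := by rw [← pow_mul]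
        _ ≤ I ^ k := Ideal.pow_le_pow_right hkts
  exact sSup_le_sSup (Set.image_mono hsubset)
end
end

section
/- Let p be a prime number, e ≥ 1 an integer, and c a positive multiple of p^e. Then for every integer i with c − p^e < i < c, the binomial coefficient binom(c, i) is divisible by p. -/
private lemma prime_dvd_choose_aux (p : ℕ) (hp : p.Prime) :
    ∀ e c i : ℕ, p ^ e ∣ c → c - p ^ e < i → i < c → p ∣ Nat.choose c i := by
  haveI : Fact p.Prime := ⟨hp⟩
  have hp0 : 0 < p := hp.pos
  intro e
  induction e with
  | zero => intro c i _ h1 h2; simp at h1; omega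
  | succ e ih =>
    intro c i hc hi1 hi2
    have hmod := (Choose.choose_modEq_choose_mod_mul_choose_div_nat (p := p) (n := c) (k := i))
    have hpc : p ∣ c := dvd_trans (dvd_pow_self p (Nat.succ_ne_zero e)) hc
    have hcm : c % p = 0 := Nat.mod_eq_zero_of_dvd hpc
    have key : p ∣ Nat.choose (c % p) (i % p) * Nat.choose (c / p) (i / p) := by
      rcases Nat.eq_zero_or_pos (i % p) with him | him
      · -- p divides both i and c: recurse
        have hpi : p ∣ i := Nat.dvd_of_mod_eq_zero him
        obtain ⟨b, rfl⟩ := hpc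
        obtain ⟨a, rfl⟩ := hpi
        have hb : p ^ e ∣ b := by
          rw [pow_succ, mul_comm (p ^ e) p] at hc
          exact (mul_dvd_mul_iff_left hp0.ne').mp hc
        have h1 : b - p ^ e < a := by
          apply Nat.lt_of_mul_lt_mul_left (a := p)
          rw [Nat.mul_sub_left_distrib]
          rw [pow_succ, mul_comm (p ^ e) p] at hi1
          exact hi1
        have h2 : a < b := Nat.lt_of_mul_lt_mul_left hi2
        have := ih b a hb h1 h2
        rw [Nat.mul_div_cancel_left b hp0, Nat.mul_div_cancel_left a hp0]
        exact Dvd.dvd.mul_left this _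
      · -- i % p > 0 while c % p = 0: first factor vanishes
        simp [hcm, Nat.choose_eq_zero_of_lt him]
    exact (Nat.modEq_zero_iff_dvd).mp (hmod.trans ((Nat.modEq_zero_iff_dvd).mpr key))

/-- Let `p` be prime, `e ≥ 1`, and `c` a positive multiple of `p^e`.  Then for every `i` with
`c − p^e < i < c`, the binomial coefficient `binom(c, i)` is divisible by `p`. -/
theorem prime_dvd_choose_of_lt (p : ℕ) (hp : p.Prime) (e : ℕ) (he : 1 ≤ e)
    (c : ℕ) (hc0 : 0 < c) (hc : p ^ e ∣ c) (i : ℕ) (hi1 : c - p ^ e < i) (hi2 : i < c) :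
    p ∣ Nat.choose c i :=
  prime_dvd_choose_aux p hp e c i hc hi1 hi2
end

section
/- Let 𝕂 be a field, n ≥ 1, and S ⊆ {1,…,n} a subset with 1 ∈ S. Let π : 𝕂[[y₁,…,yₙ]] → 𝕂[[x₁,…,xₙ]] be the continuous 𝕂-algebra homomorphism determined by the substitution y₁ ↦ x₁, y_i ↦ x₁·x_i for i ∈ S\{1}, and y_i ↦ x_i for i ∉ S. Then for every nonzero h = Σ_{α∈ℕⁿ} c_α y^α in 𝕂[[y₁,…,yₙ]], the order of π(h) equals the minimum over all multi-indices α with c_α ≠ 0 of |α|_S + Σ_{i=2}^{n} α_i, where |α|_S = Σ_{i∈S} α_i. -/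
noncomputable section

/-- The order of a multivariate power series: the smallest total degree of a monomial
appearing with nonzero coefficient (`⊤` for the zero series). -/
def mvOrder {𝕂 : Type*} [Field 𝕂] {n : ℕ} (g : MvPowerSeries (Fin n) 𝕂) : ℕ∞ :=
  ⨅ (m : Fin n →₀ ℕ) (_ : MvPowerSeries.coeff m g ≠ 0), (m.degree : ℕ∞)

/-- The continuous `𝕂`-algebra homomorphism `π : 𝕂[[y₁,…,yₙ]] → 𝕂[[x₁,…,xₙ]]` determined by
the substitution `y₁ ↦ x₁`, `y_i ↦ x₁·x_i` for `i ∈ S\{1}` and `y_i ↦ x_i` for `i ∉ S`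
(the variables are indexed by `Fin n`, with `0` playing the role of the index `1`),
described coefficientwise: since `π(y^α) = x₁^{|α|_S}·Π_{i≥2} x_i^{α_i}`, the monomial
`x^β` occurs in `π(y^α)` for a unique `α` (namely `α_i = β_i` for `i ≠ 1` and
`α₁ = β₁ − Σ_{i∈S\{1}} β_i`, provided this difference is non-negative). -/
def piMap {𝕂 : Type*} [Field 𝕂] {n : ℕ} [NeZero n] (S : Finset (Fin n))
    (h : MvPowerSeries (Fin n) 𝕂) : MvPowerSeries (Fin n) 𝕂 :=
  fun β => if (∑ i ∈ S.erase 0, β i) ≤ β 0 then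
      MvPowerSeries.coeff (Finsupp.update β 0 (β 0 - ∑ i ∈ S.erase 0, β i)) h
    else 0

lemma degree_eq_sum_univ {n : ℕ} (β : Fin n →₀ ℕ) : β.degree = ∑ i : Fin n, β i := by
  rw [Finsupp.degree]
  exact Finset.sum_subset (Finset.subset_univ _) (fun x _ hx => by
    simpa using Finsupp.notMem_support_iff.mp hx)

lemma update_apply' {n : ℕ} (β : Fin n →₀ ℕ) (a : Fin n) (b : ℕ) (x : Fin n) :
    (β.update a b) x = if x = a then b else β x := by
  rw [Finsupp.coe_update, Function.update_apply]

/-- Let `S ⊆ {1,…,n}` with `1 ∈ S` and let `π : 𝕂[[y₁,…,yₙ]] → 𝕂[[x₁,…,xₙ]]` be the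
substitution homomorphism `y₁ ↦ x₁`, `y_i ↦ x₁·x_i` for `i ∈ S\{1}`, `y_i ↦ x_i` for
`i ∉ S`.  Then for every nonzero `h = Σ_α c_α y^α`, the order of `π(h)` equals the minimum
over all `α` with `c_α ≠ 0` of `|α|_S + Σ_{i=2}^n α_i`, where `|α|_S = Σ_{i∈S} α_i`. -/
theorem order_of_monomial_substitution {𝕂 : Type*} [Field 𝕂] {n : ℕ} [NeZero n]
    (hn : 1 ≤ n) (S : Finset (Fin n)) (hS : (0 : Fin n) ∈ S)
    (h : MvPowerSeries (Fin n) 𝕂) (hh : h ≠ 0) :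
    mvOrder (piMap S h)
      = ⨅ (α : Fin n →₀ ℕ) (_ : MvPowerSeries.coeff α h ≠ 0),
          (((∑ i ∈ S, α i) + ∑ i ∈ Finset.univ.erase (0 : Fin n), α i : ℕ) : ℕ∞) := by
  apply le_antisymm
  · refine le_iInf₂ fun α hα => ?_
    set s := ∑ i ∈ S.erase 0, α i with hs
    set β : Fin n →₀ ℕ := α.update 0 (α 0 + s) with hβ
    have hβ0 : β 0 = α 0 + s := by simp [hβ, update_apply']
    have hβne : ∀ x ≠ (0 : Fin n), β x = α x := fun x hx => by
      simp [hβ, update_apply', hx]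
    have hsum : ∑ i ∈ S.erase 0, β i = s := by
      rw [hs]
      exact Finset.sum_congr rfl fun i hi => hβne i (Finset.ne_of_mem_erase hi)
    have hcond : ∑ i ∈ S.erase 0, β i ≤ β 0 := by rw [hsum, hβ0]; omega
    have hcoeff : MvPowerSeries.coeff β (piMap S h) = MvPowerSeries.coeff α h := by
      show piMap S h β = _
      rw [piMap, if_pos hcond, hsum, hβ0]
      congr 1
      simp only [hβ, Finsupp.update_idem]
      rw [Nat.add_sub_cancel, Finsupp.update_self]
    have hdeg : (β.degree : ℕ∞) = ((∑ i ∈ S, α i) + ∑ i ∈ Finset.univ.erase (0 : Fin n), α i : ℕ) := by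
      norm_cast
      rw [degree_eq_sum_univ, ← Finset.add_sum_erase _ β (Finset.mem_univ 0), hβ0,
        ← Finset.add_sum_erase _ α hS]
      have : ∑ i ∈ Finset.univ.erase (0 : Fin n), β i
          = ∑ i ∈ Finset.univ.erase (0 : Fin n), α i :=
        Finset.sum_congr rfl fun i hi => hβne i (Finset.ne_of_mem_erase hi)
      omega
    rw [mvOrder]
    exact iInf₂_le_of_le β (by rw [hcoeff]; exact hα) (le_of_eq hdeg)
  · refine le_iInf₂ fun β hβ => ?_
    have hβ' : piMap S h β ≠ 0 := hβ
    rw [piMap] at hβ'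
    by_cases hcond : (∑ i ∈ S.erase 0, β i) ≤ β 0
    · rw [if_pos hcond] at hβ'
      set s := ∑ i ∈ S.erase 0, β i with hs
      set α : Fin n →₀ ℕ := β.update 0 (β 0 - s) with hα
      have hα0 : α 0 = β 0 - s := by simp [hα, update_apply']
      have hαne : ∀ x ≠ (0 : Fin n), α x = β x := fun x hx => by
        simp [hα, update_apply', hx]
      refine iInf₂_le_of_le α hβ' (le_of_eq ?_)
      norm_cast
      rw [degree_eq_sum_univ, ← Finset.add_sum_erase _ β (Finset.mem_univ 0),
        ← Finset.add_sum_erase _ α hS]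
      have h1 : ∑ i ∈ S.erase 0, α i = s :=
        Finset.sum_congr rfl fun i hi => hαne i (Finset.ne_of_mem_erase hi)
      have h2 : ∑ i ∈ Finset.univ.erase (0 : Fin n), α i
          = ∑ i ∈ Finset.univ.erase (0 : Fin n), β i :=
        Finset.sum_congr rfl fun i hi => hαne i (Finset.ne_of_mem_erase hi)
      omega
    · exact absurd (if_neg hcond) hβ'
end
end

section
/- Let 𝕂 be a field of characteristic p > 0, k ≥ 1 an integer, and P ∈ 𝕂[x₁,…,xₙ] a homogeneous polynomial of degree d with p^k dividing d. Let t₂,…,tₙ ∈ 𝕂. If the polynomial P(1, x₂+t₂, …, xₙ+tₙ) is a p^k-th power in the formal power series ring 𝕂[[x₂,…,xₙ]], then P is a p^k-th power in 𝕂[x₁,…,xₙ]. -/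
noncomputable section

open MvPolynomial

namespace PthPowAux

variable {R : Type*} {σ : Type*}

lemma smul_finsupp_injective {q : ℕ} (hq : q ≠ 0) :
    Function.Injective (fun b : σ →₀ ℕ => q • b) := by
  intro a b hab
  ext i
  have := DFunLike.congr_fun hab i
  simp only [Finsupp.smul_apply, smul_eq_mul] at this
  exact Nat.eq_of_mul_eq_mul_left (Nat.pos_of_ne_zero hq) this

lemma pow_expand [CommSemiring R] (p : ℕ) [ExpChar R p] (k : ℕ) (h : MvPolynomial σ R) :
    h ^ p ^ k = ∑ b ∈ h.support, monomial (p ^ k • b) (h.coeff b ^ p ^ k) := by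
  haveI : ExpChar (MvPolynomial σ R) p :=
    expChar_of_injective_ringHom (C_injective σ R) p
  conv_lhs => rw [h.as_sum]
  rw [sum_pow_char_pow]
  simp [monomial_pow]

lemma coeff_pow_expand [CommSemiring R] (p : ℕ) [ExpChar R p] (hq : p ≠ 0) (k : ℕ)
    (h : MvPolynomial σ R) (b : σ →₀ ℕ) :
    (h ^ p ^ k).coeff (p ^ k • b) = h.coeff b ^ p ^ k := by
  classical
  rw [pow_expand p k h, coeff_sum]
  simp only [coeff_monomial]
  have hinj : ∀ b' : σ →₀ ℕ, p ^ k • b' = p ^ k • b ↔ b' = b := fun b' =>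
    ⟨fun h => smul_finsupp_injective (pow_ne_zero _ hq) h, fun h => by rw [h]⟩
  simp only [hinj]
  rw [Finset.sum_ite_eq' h.support b]
  split_ifs with hb
  · rfl
  · rw [notMem_support_iff.mp hb, zero_pow (pow_ne_zero _ hq)]

lemma support_pow_expand [CommSemiring R] (p : ℕ) [ExpChar R p] (k : ℕ)
    (h : MvPolynomial σ R) {m : σ →₀ ℕ} (hm : m ∈ (h ^ p ^ k).support) :
    ∃ b ∈ h.support, m = p ^ k • b := by
  classical
  by_contra hc
  push_neg at hc
  apply mem_support_iff.mp hm
  rw [pow_expand p k h, coeff_sum]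
  refine Finset.sum_eq_zero fun b hb => ?_
  rw [coeff_monomial, if_neg fun he => hc b hb he.symm]

lemma coeff_pow_congr [CommSemiring R] (f h : MvPowerSeries σ R) (N : σ →₀ ℕ)
    (hfh : ∀ i ≤ N, MvPowerSeries.coeff i f = MvPowerSeries.coeff i h) (q : ℕ) :
    ∀ i ≤ N, MvPowerSeries.coeff i (f ^ q) = MvPowerSeries.coeff i (h ^ q) := by
  classical
  induction q with
  | zero => simp
  | succ q ih =>
    intro i hi
    rw [pow_succ, pow_succ, MvPowerSeries.coeff_mul, MvPowerSeries.coeff_mul]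
    refine Finset.sum_congr rfl fun x hx => ?_
    rw [Finset.HasAntidiagonal.mem_antidiagonal] at hx
    have h1 : x.1 ≤ N := le_trans (hx ▸ le_self_add) hi
    have h2 : x.2 ≤ N := le_trans (hx ▸ le_add_self) hi
    rw [ih x.1 h1, hfh x.2 h2]

lemma coeff_pow_char_pow [CommSemiring R] (p : ℕ) [ExpChar R p] (hq : p ≠ 0) (k : ℕ)
    (g : MvPowerSeries σ R) (m : σ →₀ ℕ) :
    MvPowerSeries.coeff (p ^ k • m) (g ^ p ^ k) = (MvPowerSeries.coeff m g) ^ p ^ k := by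
  classical
  set N : σ →₀ ℕ := p ^ k • m with hN
  set t : MvPolynomial σ R := ∑ i ∈ Finset.Iic N, monomial i (MvPowerSeries.coeff i g)
    with htdef
  have ht : ∀ i ≤ N, MvPowerSeries.coeff i (t : MvPowerSeries σ R)
      = MvPowerSeries.coeff i g := by
    intro i hi
    rw [MvPolynomial.coeff_coe, htdef, coeff_sum]
    simp only [coeff_monomial]
    rw [Finset.sum_ite_eq' (Finset.Iic N) i, if_pos (Finset.mem_Iic.mpr hi)]
  have hm : m ≤ N := by
    intro i
    simp only [hN, Finsupp.smul_apply, smul_eq_mul]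
    exact Nat.le_mul_of_pos_left _ (Nat.pos_of_ne_zero (pow_ne_zero _ hq))
  calc MvPowerSeries.coeff N (g ^ p ^ k)
      = MvPowerSeries.coeff N ((t : MvPowerSeries σ R) ^ p ^ k) :=
        (coeff_pow_congr _ _ N ht _ N le_rfl).symm
    _ = (t ^ p ^ k).coeff N := by rw [← MvPolynomial.coe_pow, MvPolynomial.coeff_coe]
    _ = t.coeff m ^ p ^ k := coeff_pow_expand p hq k t m
    _ = (MvPowerSeries.coeff m g) ^ p ^ k := by
        rw [← MvPolynomial.coeff_coe, ht m hm]

end PthPowAux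

namespace PthPowAux2

variable {𝕂 : Type*} [CommSemiring 𝕂] {n : ℕ} [NeZero n]

/-- restriction of an exponent vector to the nonzero indices -/
def res (a : Fin n →₀ ℕ) : {j : Fin n // j ≠ 0} →₀ ℕ :=
  a.subtypeDomain (· ≠ 0)

lemma res_apply (a : Fin n →₀ ℕ) (j : {j : Fin n // j ≠ 0}) : res a j = a j.1 := rfl

lemma degree_split (a : Fin n →₀ ℕ) : a 0 + (res a).degree = a.degree := by
  classical
  have h1 : (res a).degree = ∑ i ∈ a.support.erase 0, a i := by
    rw [Finsupp.degree_apply, res, Finsupp.support_subtypeDomain]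
    simp only [Finsupp.subtypeDomain_apply]
    rw [Finset.sum_subtype_eq_sum_filter]
    rw [Finset.filter_ne']
  rw [h1, Finsupp.degree_apply]
  by_cases h0 : (0 : Fin n) ∈ a.support
  · exact Finset.add_sum_erase _ _ h0
  · rw [Finsupp.notMem_support_iff.mp h0, Finset.erase_eq_of_notMem h0, zero_add]

lemma res_degree_le (a : Fin n →₀ ℕ) : (res a).degree ≤ a.degree :=
  (degree_split a) ▸ le_add_self

lemma res_injOn {d : ℕ} {a b : Fin n →₀ ℕ} (ha : a.degree = d) (hb : b.degree = d)
    (hres : res a = res b) : a = b := by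
  ext i
  by_cases hi : i = 0
  · subst hi
    have h1 := degree_split a
    have h2 := degree_split b
    rw [ha] at h1; rw [hb] at h2
    rw [hres] at h1
    omega
  · exact DFunLike.congr_fun hres ⟨i, hi⟩

/-- the dehomogenization morphism on monomials -/
lemma dehom_monomial (a : Fin n →₀ ℕ) (c : 𝕂) :
    aeval (fun i : Fin n => if h : i = 0 then (1 : MvPolynomial {j : Fin n // j ≠ 0} 𝕂)
      else X ⟨i, h⟩) (monomial a c) = monomial (res a) c := by
  classical
  rw [aeval_monomial, monomial_eq, algebraMap_eq]
  congr 1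
  rw [Finsupp.prod, Finsupp.prod]
  rw [← Finset.prod_erase (a := (0 : Fin n))
    (f := fun i => (if h : i = 0 then (1 : MvPolynomial {j : Fin n // j ≠ 0} 𝕂)
      else X ⟨i, h⟩) ^ a i) (h := by simp)]
  refine Finset.prod_bij' (fun i hi => (⟨i, (Finset.mem_erase.mp hi).1⟩ : {j : Fin n // j ≠ 0}))
    (fun j _ => j.1) ?_ ?_ ?_ ?_ ?_
  · intro i hi
    rw [res, Finsupp.support_subtypeDomain, Finset.mem_subtype]
    exact (Finset.mem_erase.mp hi).2
  · intro j hj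
    rw [res, Finsupp.support_subtypeDomain, Finset.mem_subtype] at hj
    exact Finset.mem_erase.mpr ⟨j.2, hj⟩
  · intro i hi; rfl
  · intro j hj; rfl
  · intro i hi
    rw [dif_neg (Finset.mem_erase.mp hi).1]
    rfl

lemma coeff_dehom {d : ℕ} {A : MvPolynomial (Fin n) 𝕂} (hA : A.IsHomogeneous d)
    {a : Fin n →₀ ℕ} (ha : a.degree = d) :
    (aeval (fun i : Fin n => if h : i = 0 then (1 : MvPolynomial {j : Fin n // j ≠ 0} 𝕂)
      else X ⟨i, h⟩) A).coeff (res a) = A.coeff a := by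
  classical
  conv_lhs => rw [A.as_sum, map_sum]
  simp only [dehom_monomial, coeff_sum, coeff_monomial]
  rw [Finset.sum_eq_single a]
  · rw [if_pos rfl]
  · intro b hb hne
    rw [if_neg]
    intro hres
    exact hne (res_injOn (by
      by_contra hbd
      exact mem_support_iff.mp hb (hA.coeff_eq_zero hbd)) ha hres)
  · intro hna
    rw [if_pos rfl, notMem_support_iff.mp hna]

end PthPowAux2

/-- Let `𝕂` have characteristic `p > 0`, `k ≥ 1`, and let `P ∈ 𝕂[x₁,…,xₙ]` be homogeneous of
degree `d` with `p^k ∣ d` (variables indexed by `Fin n`, the index `0` playing the role of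
`1`).  If the translated dehomogenization `P(1, x₂+t₂, …, xₙ+tₙ)` is a `p^k`-th power in the
formal power series ring `𝕂[[x₂,…,xₙ]]`, then `P` is a `p^k`-th power in `𝕂[x₁,…,xₙ]`. -/
theorem pth_power_of_translate_pth_power {𝕂 : Type*} [Field 𝕂] (p : ℕ) (hp : p.Prime)
    [CharP 𝕂 p] {n : ℕ} [NeZero n] (k : ℕ) (hk : 1 ≤ k) (t : Fin n → 𝕂)
    (P : MvPolynomial (Fin n) 𝕂) (d : ℕ) (hP : P.IsHomogeneous d) (hd : p ^ k ∣ d)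
    (hpow : ∃ g : MvPowerSeries {j : Fin n // j ≠ 0} 𝕂,
      ((MvPolynomial.aeval
          (fun i : Fin n => if h : i = 0 then 1
            else MvPolynomial.X (⟨i, h⟩ : {j : Fin n // j ≠ 0}) + MvPolynomial.C (t i)) P :
          MvPolynomial {j : Fin n // j ≠ 0} 𝕂) : MvPowerSeries {j : Fin n // j ≠ 0} 𝕂)
        = g ^ (p ^ k)) :
    ∃ Q : MvPolynomial (Fin n) 𝕂, P = Q ^ (p ^ k) := by
  classical
  obtain ⟨g, hg⟩ := hpow
  haveI : Fact p.Prime := ⟨hp⟩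
  have hq0 : p ^ k ≠ 0 := pow_ne_zero _ hp.ne_zero
  have hdeg_eq : ∀ (m : {j : Fin n // j ≠ 0} →₀ ℕ), (m.sum fun _ e => e) = Finsupp.degree m :=
    fun m => rfl
  set F : MvPolynomial {j : Fin n // j ≠ 0} 𝕂 :=
    (MvPolynomial.aeval (fun i : Fin n => if h : i = 0 then 1
      else MvPolynomial.X (⟨i, h⟩ : {j : Fin n // j ≠ 0}) + MvPolynomial.C (t i)) P) with hF
  -- Part A : `g` is (the coercion of) a polynomial `h`
  set T : Finset ({j : Fin n // j ≠ 0} →₀ ℕ) :=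
    F.support.image (fun a => a.mapRange (· / p ^ k) (Nat.zero_div _)) with hT
  set h : MvPolynomial {j : Fin n // j ≠ 0} 𝕂 :=
    ∑ m ∈ T, monomial m (MvPowerSeries.coeff m g) with hh
  have hgh : (h : MvPowerSeries {j : Fin n // j ≠ 0} 𝕂) = g := by
    apply MvPowerSeries.ext
    intro m
    rw [MvPolynomial.coeff_coe, hh, coeff_sum]
    simp only [coeff_monomial]
    rw [Finset.sum_ite_eq' T m]
    split_ifs with hmT
    · rfl
    · symm
      by_contra hne
      apply hmT
      rw [hT]
      refine Finset.mem_image.mpr ⟨p ^ k • m, ?_, ?_⟩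
      · rw [mem_support_iff, ← MvPolynomial.coeff_coe, hg,
          PthPowAux.coeff_pow_char_pow p hp.ne_zero k g m]
        exact pow_ne_zero _ hne
      · ext j
        simp only [Finsupp.mapRange_apply, Finsupp.smul_apply, smul_eq_mul]
        exact Nat.mul_div_cancel_left _ (Nat.pos_of_ne_zero hq0)
  have hFh : F = h ^ p ^ k := by
    have hco : (F : MvPowerSeries {j : Fin n // j ≠ 0} 𝕂)
        = ((h ^ p ^ k : MvPolynomial {j : Fin n // j ≠ 0} 𝕂) : MvPowerSeries {j : Fin n // j ≠ 0} 𝕂) := by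
      rw [MvPolynomial.coe_pow, hgh, hg]
    exact MvPolynomial.coe_injective _ _ hco
  -- Part B : undo the translation
  set τ : MvPolynomial {j : Fin n // j ≠ 0} 𝕂 →ₐ[𝕂] MvPolynomial {j : Fin n // j ≠ 0} 𝕂 :=
    aeval (fun j : {j : Fin n // j ≠ 0} => X j - C (t j.1)) with hτ
  set D : MvPolynomial (Fin n) 𝕂 →ₐ[𝕂] MvPolynomial {j : Fin n // j ≠ 0} 𝕂 :=
    aeval (fun i : Fin n => if h : i = 0 then 1 else X ⟨i, h⟩) with hD
  set h₂ : MvPolynomial {j : Fin n // j ≠ 0} 𝕂 := τ h with hh₂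
  have hDP : D P = h₂ ^ p ^ k := by
    have hcomp : τ F = D P := by
      rw [hF]
      have hc := DFunLike.congr_fun (comp_aeval (f := fun i : Fin n => if h : i = 0 then 1
        else X (⟨i, h⟩ : {j : Fin n // j ≠ 0}) + C (t i)) τ) P
      rw [AlgHom.comp_apply] at hc
      rw [hc]
      have hfun : (fun i : Fin n => τ (if h : i = 0 then 1
          else X (⟨i, h⟩ : {j : Fin n // j ≠ 0}) + C (t i)))
          = (fun i : Fin n => if h : i = 0
            then (1 : MvPolynomial {j : Fin n // j ≠ 0} 𝕂) else X ⟨i, h⟩) := by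
        funext i
        by_cases hi : i = 0
        · simp [hi]
        · rw [dif_neg hi, dif_neg hi, map_add, hτ, aeval_X, aeval_C, algebraMap_eq]
          ring
      rw [hfun, hD]
    rw [← hcomp, hFh, map_pow, hh₂]
  -- Part C : degree bounds
  set e := d / p ^ k with he
  have hqe : e * p ^ k = d := Nat.div_mul_cancel hd
  have hsupp : ∀ a ∈ P.support, Finsupp.degree a = d := fun a ha => by
    by_contra hne; exact mem_support_iff.mp ha (hP.coeff_eq_zero hne)
  have hDPdeg : (D P).totalDegree ≤ d := by
    have hDPsum : D P = ∑ a ∈ P.support, monomial (PthPowAux2.res a) (P.coeff a) := by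
      conv_lhs => rw [P.as_sum, map_sum]
      refine Finset.sum_congr rfl fun a _ => ?_
      rw [hD]; exact PthPowAux2.dehom_monomial a _
    rw [hDPsum]
    refine (totalDegree_finset_sum _ _).trans (Finset.sup_le fun a ha => ?_)
    refine (totalDegree_monomial_le _ _).trans ?_
    have : ((PthPowAux2.res a).sum fun _ => id) = Finsupp.degree (PthPowAux2.res a) := rfl
    rw [this]
    exact (PthPowAux2.res_degree_le a).trans (hsupp a ha).le
  have hh₂deg : ∀ b ∈ h₂.support, Finsupp.degree b ≤ e := by
    intro b hb
    have h1 : (p ^ k • b) ∈ (h₂ ^ p ^ k).support := by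
      rw [mem_support_iff, PthPowAux.coeff_pow_expand p hp.ne_zero k h₂ b]
      exact pow_ne_zero _ (mem_support_iff.mp hb)
    rw [← hDP] at h1
    have h2 : Finsupp.degree (p ^ k • b) ≤ d := by
      rw [← hdeg_eq]
      exact (le_totalDegree h1).trans hDPdeg
    have h3 : Finsupp.degree (p ^ k • b) = p ^ k * Finsupp.degree b := by
      simp only [Finsupp.degree_eq_weight_one, map_nsmul, smul_eq_mul]
    rw [h3] at h2
    rw [he]
    exact (Nat.le_div_iff_mul_le (Nat.pos_of_ne_zero hq0)).mpr (by rwa [mul_comm])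
  -- Part D : homogenize
  set lift : ({j : Fin n // j ≠ 0} →₀ ℕ) → (Fin n →₀ ℕ) :=
    fun b => Finsupp.single 0 (e - Finsupp.degree b) + Finsupp.mapDomain Subtype.val b with hlift
  have hres_lift : ∀ b, PthPowAux2.res (lift b) = b := by
    intro b
    ext j
    rw [PthPowAux2.res_apply, hlift]
    simp only [Finsupp.add_apply]
    rw [Finsupp.single_eq_of_ne j.2,
      Finsupp.mapDomain_apply Subtype.val_injective b j, zero_add]
  have hdegree_add : ∀ x y : Fin n →₀ ℕ,
      Finsupp.degree (x + y) = Finsupp.degree x + Finsupp.degree y := fun x y => by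
    simp only [Finsupp.degree_eq_weight_one, map_add]
  have hlift_deg : ∀ b ∈ h₂.support, Finsupp.degree (lift b) = e := by
    intro b hb
    have hmap : Finsupp.degree (Finsupp.mapDomain (Subtype.val) b) = Finsupp.degree b := by
      simp only [Finsupp.degree_eq_weight_one, Finsupp.weight_apply]
      rw [Finsupp.sum_mapDomain_index (by simp) (by intros; rw [add_smul])]
    have hsingle : Finsupp.degree (Finsupp.single (0 : Fin n) (e - Finsupp.degree b))
        = e - Finsupp.degree b := by
      simp only [Finsupp.degree_eq_weight_one, Finsupp.weight_apply]
      rw [Finsupp.sum_single_index] <;> simp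
    rw [hlift]
    simp only
    rw [hdegree_add, hsingle, hmap, Nat.sub_add_cancel (hh₂deg b hb)]
  set Q : MvPolynomial (Fin n) 𝕂 := ∑ b ∈ h₂.support, monomial (lift b) (h₂.coeff b) with hQ
  have hQhom : Q.IsHomogeneous e := by
    rw [hQ]
    exact IsHomogeneous.sum _ _ _ fun b hb => isHomogeneous_monomial _ (hlift_deg b hb)
  have hQqhom : (Q ^ p ^ k).IsHomogeneous d := hqe ▸ hQhom.pow (p ^ k)
  have hDQ : D Q = h₂ := by
    rw [hQ, map_sum]
    conv_rhs => rw [h₂.as_sum]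
    refine Finset.sum_congr rfl fun b hb => ?_
    rw [hD, PthPowAux2.dehom_monomial, hres_lift]
  have hfinal : D (Q ^ p ^ k) = D P := by rw [map_pow, hDQ, hDP]
  refine ⟨Q, ?_⟩
  ext a
  by_cases hda : Finsupp.degree a = d
  · have h1 := PthPowAux2.coeff_dehom hP hda
    have h2 := PthPowAux2.coeff_dehom hQqhom hda
    rw [← hD] at h1 h2
    rw [← h1, ← h2, hfinal]
  · rw [hP.coeff_eq_zero hda, hQqhom.coeff_eq_zero hda]

end
end
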